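/- arXiv:1711.10418 — 3 statements merged into one kernel-verified Lean document; each statement's English description precedes it below -/
import Mathlib

section
/- Let C = (b,θ,0,m) be a magnetic cycle of length n over a finite set Y with standard edge weights, and let W ⊆ Y. Let F ∈ ℝ be a representative of the flux F_θ(C) and δ = min_{k∈ℤ} |F − 2kπ|. Then ι_{2,θ}(W) = n·|1 − e^{iδ/n}|² if W = Y, and ι_{2,θ}(W) = 0 if W ≠ Y. -/
open Complex MeasureTheory
open scoped Classical

noncomputable section

variable {X : Type*}

/-- The structural hypotheses of a magnetic graph `(b, θ, q, m)` over `X`: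
`b` is nonnegative, symmetric, has zero diagonal and summable rows; the
magnetic potential `θ` is antisymmetric modulo `2π`; the measure `m` is positive. -/
def IsMagneticGraph (b θ : X → X → ℝ) (m : X → ℝ) : Prop :=
  (∀ x y, 0 ≤ b x y) ∧ (∀ x y, b x y = b y x) ∧ (∀ x, b x x = 0) ∧
  (∀ x, Summable fun y => b x y) ∧
  (∀ x y, ∃ k : ℤ, θ x y + θ y x = 2 * Real.pi * k) ∧
  (∀ x, 0 < m x)

/-- The `p`-frustration index `ι_{p,θ}(W)` of a finite set `W`. -/
def frust (b θ : X → X → ℝ) (p : ℝ) (W : Finset X) : ℝ :=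
  sInf {r : ℝ | ∃ τ : X → ℂ, (∀ x ∈ W, ‖τ x‖ = 1) ∧
    r = (1 / 2) * ∑ x ∈ W, ∑ y ∈ W,
      b x y * ‖τ x - Complex.exp ((θ x y : ℂ) * Complex.I) * τ y‖ ^ p}

/-- The measure `b(∂W)` of the boundary `∂W = (W×(X∖W)) ∪ ((X∖W)×W)`. -/
def bBoundary (b : X → X → ℝ) (W : Finset X) : ℝ :=
  (∑ x ∈ W, ∑' y : {y : X // y ∉ W}, b x ↑y) +
  (∑ y ∈ W, ∑' x : {x : X // x ∉ W}, b ↑x y)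

/-- `(a,k)_p`-magnetic-sparseness. -/
def MagSparse (b θ : X → X → ℝ) (q m : X → ℝ) (p a k : ℝ) : Prop :=
  ∀ W : Finset X,
    (∑ x ∈ W, ∑ y ∈ W, b x y) ≤
      (1 + a) * frust b θ p W +
      a * ((1 / 2) * bBoundary b W + ∑ x ∈ W, max (q x) 0 * m x) +
      k * ∑ x ∈ W, m x

/-- The energy functional `Q_{p,θ}` on finitely supported functions. -/
def Qform (b θ : X → X → ℝ) (q m : X → ℝ) (p : ℝ) (f : X → ℂ) : ℝ :=
  (1 / 2) * ∑' x, ∑' y, b x y * ‖f x - Complex.exp ((θ x y : ℂ) * Complex.I) * f y‖ ^ p +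
  ∑' x, q x * ‖f x‖ ^ p * m x

/-- The weighted vertex degree `Deg(x) = (1/m(x)) Σ_y b(x,y) + q(x)`. -/
def Degf (b : X → X → ℝ) (q m : X → ℝ) (x : X) : ℝ :=
  (1 / m x) * ∑' y, b x y + q x

/-- The pairing `⟨Deg, |f|^p⟩ = Σ_x Deg(x) |f(x)|^p m(x)`. -/
def degPair (b : X → X → ℝ) (q m : X → ℝ) (p : ℝ) (f : X → ℂ) : ℝ :=
  ∑' x, Degf b q m x * ‖f x‖ ^ p * m x

/-- The `p`-norm to the `p`: `‖f‖_p^p = Σ_x |f(x)|^p m(x)`. -/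
def pNorm (m : X → ℝ) (p : ℝ) (f : X → ℂ) : ℝ :=
  ∑' x, ‖f x‖ ^ p * m x

/-- `q ∈ K_α^{p,θ}` with constant `C`: the negative part of `q` is form bounded. -/
def InKClass (b θ : X → X → ℝ) (q m : X → ℝ) (p α C : ℝ) : Prop :=
  ∀ f : X → ℂ, (Function.support f).Finite →
    (∑' x, max (-q x) 0 * ‖f x‖ ^ p * m x) ≤
      α * Qform b θ (fun x => max (q x) 0) m p f + C * pNorm m p f



noncomputable def Dd (x : ℝ) : ℝ := |x - 2 * Real.pi * (round (x / (2 * Real.pi)))|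

lemma tpp : (0:ℝ) < 2 * Real.pi := by positivity

lemma Dd_le (x : ℝ) (k : ℤ) : Dd x ≤ |x - 2 * Real.pi * k| := by
  have h2 : (0:ℝ) < 2 * Real.pi := tpp
  set u := x / (2 * Real.pi) with hu
  have hx : x = 2 * Real.pi * u := by rw [hu]; field_simp
  have e1 : x - 2 * Real.pi * round u = 2 * Real.pi * (u - round u) := by rw [hx]; ring
  have e2 : x - 2 * Real.pi * k = 2 * Real.pi * (u - k) := by rw [hx]; ring
  rw [Dd, ← hu, e1, e2, abs_mul (2*Real.pi), abs_mul (2*Real.pi), abs_of_pos h2]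
  have key : |u - (round u : ℝ)| ≤ |u - (k:ℝ)| := by
    rcases eq_or_ne k (round u) with h | h
    · rw [h]
    · have h1 : (1:ℝ) ≤ |(k:ℝ) - round u| := by
        have h0 : (1:ℤ) ≤ |k - round u| := Int.one_le_abs (sub_ne_zero.2 h)
        have : ((1:ℤ):ℝ) ≤ ((|k - round u| : ℤ) : ℝ) := Int.cast_le.2 h0
        rw [Int.cast_abs] at this
        push_cast at this ⊢
        linarith
      have h3 : |u - (round u : ℝ)| ≤ 1/2 := abs_sub_round u
      have h4 : |(k:ℝ) - round u| ≤ |u - (round u:ℝ)| + |u - (k:ℝ)| := by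
        calc |(k:ℝ) - round u| = |(u - (round u:ℝ)) - (u - k)| := by ring_nf
        _ ≤ |u - (round u:ℝ)| + |u - (k:ℝ)| := abs_sub _ _
      linarith
  nlinarith

lemma Dd_nonneg (x : ℝ) : 0 ≤ Dd x := abs_nonneg _

lemma Dd_le_pi (x : ℝ) : Dd x ≤ Real.pi := by
  have h2 : (0:ℝ) < 2 * Real.pi := tpp
  have h3 : |x / (2*Real.pi) - round (x / (2*Real.pi))| ≤ 1/2 := abs_sub_round _
  have hx : x - 2 * Real.pi * round (x / (2*Real.pi)) = (2*Real.pi) * (x / (2*Real.pi) - round (x / (2*Real.pi))) := by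
    field_simp
  rw [Dd, hx, abs_mul (2*Real.pi), abs_of_pos h2]
  nlinarith

lemma Dd_cos (x : ℝ) : Real.cos (Dd x) = Real.cos x := by
  rw [Dd, Real.cos_abs]
  have : x - 2 * Real.pi * round (x / (2*Real.pi)) = x + ((-(round (x / (2*Real.pi))) : ℤ) : ℝ) * (2 * Real.pi) := by
    push_cast; ring
  rw [this, Real.cos_add_int_mul_two_pi]

lemma Dd_self_mem (x : ℝ) : ∃ k : ℤ, Dd x = |x - 2 * Real.pi * k| := ⟨round (x / (2*Real.pi)), rfl⟩

lemma Dd_add_le (x y : ℝ) : Dd (x + y) ≤ Dd x + Dd y := by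
  obtain ⟨kx, hkx⟩ := Dd_self_mem x
  obtain ⟨ky, hky⟩ := Dd_self_mem y
  calc Dd (x + y) ≤ |x + y - 2 * Real.pi * ((kx + ky : ℤ) : ℝ)| := Dd_le _ _
  _ ≤ |x - 2*Real.pi*kx| + |y - 2*Real.pi*ky| := by
      have e : x + y - 2 * Real.pi * ((kx + ky : ℤ) : ℝ) = (x - 2*Real.pi*kx) + (y - 2*Real.pi*ky) := by
        push_cast; ring
      rw [e]; exact abs_add_le _ _
  _ = Dd x + Dd y := by rw [hkx, hky]

lemma Dd_eq_of (x y : ℝ) (k : ℤ) (h : x = y + 2 * Real.pi * k) : Dd x = Dd y := by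
  apply le_antisymm
  · obtain ⟨ky, hky⟩ := Dd_self_mem y
    calc Dd x ≤ |x - 2*Real.pi*((ky + k : ℤ):ℝ)| := Dd_le _ _
    _ = Dd y := by rw [hky, h]; push_cast; ring_nf
  · obtain ⟨kx, hkx⟩ := Dd_self_mem x
    calc Dd y ≤ |y - 2*Real.pi*((kx - k : ℤ):ℝ)| := Dd_le _ _
    _ = Dd x := by rw [hkx, h]; push_cast; ring_nf

lemma Dd_neg (x : ℝ) : Dd (-x) = Dd x := by
  apply le_antisymm
  · obtain ⟨kx, hkx⟩ := Dd_self_mem x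
    calc Dd (-x) ≤ |(-x) - 2*Real.pi*((-kx : ℤ):ℝ)| := Dd_le _ _
    _ = Dd x := by rw [hkx]; push_cast; rw [← abs_neg]; ring_nf
  · obtain ⟨kx, hkx⟩ := Dd_self_mem (-x)
    calc Dd x ≤ |x - 2*Real.pi*((-kx : ℤ):ℝ)| := Dd_le _ _
    _ = Dd (-x) := by rw [hkx]; push_cast; rw [← abs_neg (-x - _)]; ring_nf

lemma Dd_sum_le {ι : Type*} (s : Finset ι) (f : ι → ℝ) :
    Dd (∑ i ∈ s, f i) ≤ ∑ i ∈ s, Dd (f i) := by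
  classical
  induction s using Finset.induction_on with
  | empty => simp [Dd, Real.pi_ne_zero]
  | @insert a s' ha ih =>
      rw [Finset.sum_insert ha, Finset.sum_insert ha]
      exact le_trans (Dd_add_le _ _) (by linarith)

lemma jensen_pt (n : ℕ) (hn : 2 ≤ n) (e δ : ℝ) (he0 : 0 ≤ e) (he2 : e ≤ Real.pi/2)
    (hde : e ≤ δ) (hδπ : δ ≤ Real.pi) :
    Real.cos e + n * Real.cos ((δ - e)/n) ≤ (n+1) * Real.cos (δ/(n+1)) := by
  have hnR : (2:ℝ) ≤ n := by exact_mod_cast hn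
  have hn0 : (0:ℝ) < n := by linarith
  have hcc := strictConcaveOn_cos_Icc.concaveOn
  have hx : e ∈ Set.Icc (-(Real.pi/2)) (Real.pi/2) := ⟨by linarith [Real.pi_pos], he2⟩
  have hy : (δ - e)/n ∈ Set.Icc (-(Real.pi/2)) (Real.pi/2) := by
    constructor
    · have : (0:ℝ) ≤ (δ - e)/n := div_nonneg (by linarith) hn0.le
      linarith [Real.pi_pos]
    · rw [div_le_iff₀ hn0]
      nlinarith [Real.pi_pos]
  have ha : (0:ℝ) ≤ 1/(n+1) := by positivity
  have hb : (0:ℝ) ≤ n/(n+1) := by positivity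
  have hab : 1/((n:ℝ)+1) + n/(n+1) = 1 := by field_simp; ring
  have := hcc.2 hx hy ha hb hab
  have hcomb : (1/((n:ℝ)+1)) • e + ((n:ℝ)/(n+1)) • ((δ - e)/n) = δ/(n+1) := by
    have hn' : (n:ℝ) ≠ 0 := hn0.ne'
    have hn1 : (n:ℝ) + 1 ≠ 0 := by positivity
    simp only [smul_eq_mul]
    field_simp
    ring
  rw [hcomb] at this
  have hmul : ((n:ℝ)+1) * ((1/((n:ℝ)+1)) • Real.cos e + ((n:ℝ)/(n+1)) • Real.cos ((δ - e)/n))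
      = Real.cos e + n * Real.cos ((δ - e)/n) := by
    simp only [smul_eq_mul]
    field_simp
    try ring
  calc Real.cos e + n * Real.cos ((δ - e)/n)
      = ((n:ℝ)+1) * ((1/((n:ℝ)+1)) • Real.cos e + ((n:ℝ)/(n+1)) • Real.cos ((δ - e)/n)) := hmul.symm
    _ ≤ ((n:ℝ)+1) * Real.cos (δ/(n+1)) := by
        apply mul_le_mul_of_nonneg_left this (by positivity)

lemma clubs (n : ℕ) (hn : 1 ≤ n) (e δ : ℝ) (he0 : 0 ≤ e) (hde : e ≤ δ) (hδπ : δ ≤ Real.pi) :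
    Real.cos e + n * Real.cos ((δ - e)/n) ≤ (n+1) * Real.cos (δ/(n+1)) := by
  rcases eq_or_lt_of_le hn with h1 | h2
  · -- n = 1
    have h1 : n = 1 := h1.symm
    subst h1
    push_cast
    simp only [div_one]
    have := Real.cos_add_cos e (δ - e)
    have he : e + (δ - e) = δ := by ring
    rw [he] at this
    have hc2 : 0 ≤ Real.cos (δ/2) := by
      apply Real.cos_nonneg_of_mem_Icc
      constructor <;> [linarith [Real.pi_pos]; linarith]
    nlinarith [Real.cos_le_one ((e - (δ - e))/2), Real.neg_one_le_cos ((e - (δ - e))/2)]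
  · have hn2 : 2 ≤ n := h2
    have hnR : (2:ℝ) ≤ n := by exact_mod_cast hn2
    have hn0 : (0:ℝ) < n := by linarith
    rcases le_or_gt e (Real.pi/2) with he2 | he2
    · exact jensen_pt n hn2 e δ he0 he2 hde hδπ
    · -- e > Real.pi/2 : monotone reduction
      set g : ℝ → ℝ := fun t => Real.cos t + n * Real.cos ((δ - t)/n) with hg
      have hderiv : ∀ t : ℝ, HasDerivAt g (-Real.sin t + Real.sin ((δ - t)/n)) t := by
        intro t
        have h1 : HasDerivAt (fun t : ℝ => (δ - t)/n) (-1/n) t := by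
          have := ((hasDerivAt_id t).const_sub δ).div_const (n:ℝ)
          simpa using this
        have h2 := (Real.hasDerivAt_cos ((δ - t)/n)).comp t h1
        have h3 := h2.const_mul (n:ℝ)
        have h4 := (Real.hasDerivAt_cos t).add h3
        have : -Real.sin t + (n:ℝ) * (-Real.sin ((δ - t)/n) * (-1/n)) = -Real.sin t + Real.sin ((δ - t)/n) := by
          field_simp
        rw [this] at h4
        exact h4
      have hanti : AntitoneOn g (Set.Icc (Real.pi/2) δ) := by
        apply antitoneOn_of_deriv_nonpos (convex_Icc _ _)
        · exact Continuous.continuousOn (by continuity)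
        · intro t ht
          exact (hderiv t).differentiableAt.differentiableWithinAt
        · intro t ht
          rw [interior_Icc] at ht
          rw [(hderiv t).deriv]
          have hsin : Real.sin ((δ - t)/n) ≤ Real.sin t := by
            rw [← Real.sin_pi_sub t]
            apply Real.sin_le_sin_of_le_of_le_pi_div_two
            · have : (0:ℝ) ≤ (δ - t)/n := by
                apply div_nonneg (by linarith [ht.2]) (by linarith)
              linarith [Real.pi_pos]
            · linarith [ht.1]
            · rw [div_le_iff₀ hn0]
              nlinarith [ht.1, ht.2]
          linarith
      have hmem1 : (Real.pi/2) ∈ Set.Icc (Real.pi/2) δ := ⟨le_refl _, by linarith⟩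
      have hmem2 : e ∈ Set.Icc (Real.pi/2) δ := ⟨le_of_lt he2, hde⟩
      have := hanti hmem1 hmem2 (le_of_lt he2)
      calc g e ≤ g (Real.pi/2) := this
        _ ≤ (n+1) * Real.cos (δ/(n+1)) := by
            apply jensen_pt n hn2 (Real.pi/2) δ (by linarith [Real.pi_pos]) le_rfl (by linarith) hδπ

lemma key_ineq {ι : Type*} [DecidableEq ι] (s : Finset ι) (d : ι → ℝ)
    (hd : ∀ i ∈ s, 0 ≤ d i ∧ d i ≤ Real.pi) (δ : ℝ) (h0 : 0 ≤ δ) (hπ : δ ≤ Real.pi)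
    (hsum : δ ≤ ∑ i ∈ s, d i) :
    (s.card : ℝ) * (1 - Real.cos (δ / s.card)) ≤ ∑ i ∈ s, (1 - Real.cos (d i)) := by
  induction s using Finset.induction_on generalizing δ with
  | empty =>
      simp only [Finset.sum_empty, Finset.card_empty] at hsum ⊢
      have : δ = 0 := le_antisymm hsum h0
      simp [this]
  | @insert a s' ha ih =>
      have hda := hd a (Finset.mem_insert_self a s')
      have hd' : ∀ i ∈ s', 0 ≤ d i ∧ d i ≤ Real.pi := fun i hi => hd i (Finset.mem_insert_of_mem hi)
      rw [Finset.sum_insert ha] at hsum ⊢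
      rw [Finset.card_insert_of_notMem ha]
      rcases Nat.eq_zero_or_pos s'.card with hc0 | hc1
      · -- s' empty
        have hs' : s' = ∅ := Finset.card_eq_zero.1 hc0
        subst hs'
        simp only [Finset.sum_empty, Finset.card_empty, add_zero] at hsum ⊢
        push_cast
        simp only [one_mul, div_one]
        have : Real.cos (d a) ≤ Real.cos δ :=
          Real.cos_le_cos_of_nonneg_of_le_pi h0 hda.2 hsum
        linarith
      · set m := s'.card with hm
        have hmR : (1:ℝ) ≤ m := by exact_mod_cast hc1
        set δ' := max (δ - d a) 0 with hδ'
        have hδ'0 : 0 ≤ δ' := le_max_right _ _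
        have hδ'δ : δ' ≤ δ := by
          apply max_le (by linarith [hda.1]) h0
        have hδ'Real.pi : δ' ≤ Real.pi := le_trans hδ'δ hπ
        have hδ'sum : δ' ≤ ∑ i ∈ s', d i := by
          apply max_le
          · linarith
          · exact Finset.sum_nonneg (fun i hi => (hd' i hi).1)
        have hIH := ih hd' δ' hδ'0 hδ'Real.pi hδ'sum
        set e := δ - δ' with he
        have he0 : 0 ≤ e := by simp [he]; linarith
        have heδ : e ≤ δ := by simp [he]; linarith
        have head : e ≤ d a := by
          rcases le_or_gt (δ - d a) 0 with h | h
          · have : δ' = 0 := max_eq_right h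
            simp [he, this]; linarith
          · have : δ' = δ - d a := max_eq_left (le_of_lt h)
            simp [he, this]
        have hce : Real.cos (d a) ≤ Real.cos e :=
          Real.cos_le_cos_of_nonneg_of_le_pi he0 hda.2 head
        have hclubs := clubs m hc1 e δ he0 heδ hπ
        have hδe : δ - e = δ' := by simp [he]
        rw [hδe] at hclubs
        push_cast
        nlinarith [hIH, hclubs, hce]

lemma norm_exp_real_mul_I (r : ℝ) : ‖Complex.exp ((r:ℂ) * Complex.I)‖ = 1 := by
  rw [Complex.norm_exp_ofReal_mul_I]

lemma exp_real_add (a c : ℝ) :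
    Complex.exp ((a:ℂ) * Complex.I) * Complex.exp ((c:ℂ) * Complex.I)
      = Complex.exp (((a + c : ℝ):ℂ) * Complex.I) := by
  rw [← Complex.exp_add]; push_cast; ring_nf

lemma exp_two_pi_int (k : ℤ) : Complex.exp (((2 * Real.pi * k : ℝ):ℂ) * Complex.I) = 1 := by
  have := Complex.exp_int_mul_two_pi_mul_I k
  rw [← this]; congr 1; push_cast; ring

lemma norm_one_sub_exp (r : ℝ) :
    ‖(1:ℂ) - Complex.exp ((r:ℂ) * Complex.I)‖^2 = 2 - 2 * Real.cos r := by
  rw [Complex.exp_mul_I, ← Complex.ofReal_cos, ← Complex.ofReal_sin]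
  rw [Complex.sq_norm]
  simp only [Complex.normSq_apply, Complex.sub_re, Complex.sub_im, Complex.one_re,
    Complex.one_im, Complex.add_re, Complex.add_im, Complex.ofReal_re, Complex.ofReal_im,
    Complex.mul_re, Complex.mul_im, Complex.I_re, Complex.I_im]
  have := Real.sin_sq_add_cos_sq r
  nlinarith

lemma norm_exp_sub_exp (a b c : ℝ) (u v : ℂ) (hu : u = Complex.exp ((b:ℂ) * Complex.I))
    (hv : v = Complex.exp ((c:ℂ) * Complex.I)) :
    ‖u - Complex.exp ((a:ℂ) * Complex.I) * v‖
      = ‖(1:ℂ) - Complex.exp (((a + c - b : ℝ):ℂ) * Complex.I)‖ := by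
  subst hu hv
  have key : Complex.exp ((b:ℂ) * Complex.I) - Complex.exp ((a:ℂ) * Complex.I) * Complex.exp ((c:ℂ) * Complex.I)
      = Complex.exp ((b:ℂ) * Complex.I) * ((1:ℂ) - Complex.exp (((a + c - b : ℝ):ℂ) * Complex.I)) := by
    rw [mul_sub, mul_one, exp_real_add, exp_real_add]
    have : (b + (a + c - b) : ℝ) = a + c := by ring
    rw [this]
  rw [key, norm_mul, norm_exp_real_mul_I, one_mul]

lemma norm_sym (t1 t2 : ℝ) (k : ℤ) (hk : t1 + t2 = 2 * Real.pi * k) (u v : ℂ) :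
    ‖u - Complex.exp ((t1:ℂ) * Complex.I) * v‖ = ‖v - Complex.exp ((t2:ℂ) * Complex.I) * u‖ := by
  have h1 : Complex.exp ((t2:ℂ) * Complex.I) * (u - Complex.exp ((t1:ℂ) * Complex.I) * v)
      = Complex.exp ((t2:ℂ) * Complex.I) * u - v := by
    rw [mul_sub, ← mul_assoc, exp_real_add]
    have : (t2 + t1 : ℝ) = 2 * Real.pi * k := by linarith
    rw [this, exp_two_pi_int, one_mul]
  have h2 : ‖u - Complex.exp ((t1:ℂ) * Complex.I) * v‖
      = ‖Complex.exp ((t2:ℂ) * Complex.I) * (u - Complex.exp ((t1:ℂ) * Complex.I) * v)‖ := by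
    rw [norm_mul, norm_exp_real_mul_I, one_mul]
  rw [h2, h1, norm_sub_rev]
section Cycle
variable (n : ℕ) [NeZero n] {Y : Type*} [Fintype Y]

lemma two_ne_zero_zmod (hn : 3 ≤ n) : (2 : ZMod n) ≠ 0 := by
  intro h
  have h2 : ((2:ℕ) : ZMod n) = 0 := by exact_mod_cast h
  rw [ZMod.natCast_eq_zero_iff] at h2
  have := Nat.le_of_dvd (by norm_num) h2
  omega

lemma succ_ne_pred (hn : 3 ≤ n) (l : ZMod n) : l + 1 ≠ l - 1 := by
  intro h
  apply two_ne_zero_zmod n hn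
  have h3 : l + 1 - (l - 1) = (2:ZMod n) := by ring
  rw [h, sub_self] at h3
  exact h3.symm

lemma cycle_reduce (hn : 3 ≤ n) (Φ : Y ≃ ZMod n) (b θ : Y → Y → ℝ)
    (hb : ∀ x y, b x y = if (Φ x - Φ y = 1 ∨ Φ x - Φ y = -1) then 1 else 0)
    (hθ : ∀ x y : Y, ∃ k : ℤ, θ x y + θ y x = 2 * Real.pi * k) (τ : Y → ℂ) :
    ∑ x : Y, ∑ y : Y, b x y * ‖τ x - Complex.exp ((θ x y :ℂ) * Complex.I) * τ y‖^(2:ℕ)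
      = 2 * ∑ l : ZMod n, ‖τ (Φ.symm (l+1)) -
          Complex.exp ((θ (Φ.symm (l+1)) (Φ.symm l) :ℂ) * Complex.I) * τ (Φ.symm l)‖^(2:ℕ) := by
  classical
  set E : ZMod n → ZMod n → ℝ := fun j l => ‖τ (Φ.symm j) -
      Complex.exp ((θ (Φ.symm j) (Φ.symm l) :ℂ) * Complex.I) * τ (Φ.symm l)‖^(2:ℕ) with hE
  have h1 : ∀ F : Y → ℝ, ∑ x : Y, F x = ∑ j : ZMod n, F (Φ.symm j) :=
    fun F => (Equiv.sum_comp Φ.symm F).symm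
  have step1 : ∑ x : Y, ∑ y : Y, b x y * ‖τ x - Complex.exp ((θ x y :ℂ) * Complex.I) * τ y‖^(2:ℕ)
      = ∑ j : ZMod n, ∑ l : ZMod n, (if (j - l = 1 ∨ j - l = -1) then E j l else 0) := by
    rw [h1]
    apply Finset.sum_congr rfl
    intro j _
    rw [h1]
    apply Finset.sum_congr rfl
    intro l _
    rw [hb]
    simp only [Equiv.apply_symm_apply, ite_mul, one_mul, zero_mul, hE]
  have step2 : ∀ l : ZMod n, ∑ j : ZMod n, (if (j - l = 1 ∨ j - l = -1) then E j l else 0)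
      = E (l+1) l + E (l-1) l := by
    intro l
    have hsplit : ∀ j : ZMod n, (if (j - l = 1 ∨ j - l = -1) then E j l else 0)
        = (if j = l + 1 then E j l else 0) + (if j = l - 1 then E j l else 0) := by
      intro j
      have e1 : j - l = 1 ↔ j = l + 1 := by rw [sub_eq_iff_eq_add, add_comm]
      have e2 : j - l = -1 ↔ j = l - 1 := by
        rw [sub_eq_iff_eq_add]
        have h4 : (-1 : ZMod n) + l = l - 1 := by ring
        rw [h4]
      simp only [e1, e2]
      by_cases hj1 : j = l + 1
      · have hj2 : ¬ (j = l - 1) := by rw [hj1]; exact succ_ne_pred n hn l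
        subst hj1
        rw [if_pos (Or.inl rfl), if_pos rfl, if_neg (succ_ne_pred n hn l), add_zero]
      · by_cases hj2 : j = l - 1
        · subst hj2
          rw [if_pos (Or.inr rfl), if_pos rfl, if_neg (fun h => succ_ne_pred n hn l h.symm), zero_add]
        · have : ¬ (j = l + 1 ∨ j = l - 1) := by tauto
          simp [hj1, hj2, this]
    rw [Finset.sum_congr rfl (fun j _ => hsplit j), Finset.sum_add_distrib,
        Finset.sum_ite_eq' Finset.univ (l+1) (fun j => E j l),
        Finset.sum_ite_eq' Finset.univ (l-1) (fun j => E j l)]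
    simp
  have step3 : ∑ l : ZMod n, E (l-1) l = ∑ l : ZMod n, E l (l+1) := by
    have h5 := Equiv.sum_comp (Equiv.addRight (1 : ZMod n)) (fun l => E (l - 1) l)
    rw [← h5]
    apply Finset.sum_congr rfl
    intro l _
    simp [Equiv.coe_addRight, add_sub_cancel_right]
  have step4 : ∀ l : ZMod n, E l (l+1) = E (l+1) l := by
    intro l
    obtain ⟨k, hk⟩ := hθ (Φ.symm l) (Φ.symm (l+1))
    simp only [hE]
    rw [norm_sym _ _ k hk]
  rw [step1, Finset.sum_comm]
  rw [Finset.sum_congr rfl (fun l _ => step2 l), Finset.sum_add_distrib, step3,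
      Finset.sum_congr rfl (fun l _ => step4 l)]
  ring

lemma cycle_lower (hn : 3 ≤ n) (Φ : Y ≃ ZMod n) (θ : Y → Y → ℝ) (τ : Y → ℂ)
    (hτ : ∀ x : Y, ‖τ x‖ = 1) (δ : ℝ)
    (hδ : δ = Dd (∑ l : ZMod n, θ (Φ.symm (l+1)) (Φ.symm l))) :
    (n:ℝ) * (2 - 2 * Real.cos (δ / n)) ≤
      ∑ l : ZMod n, ‖τ (Φ.symm (l+1)) -
        Complex.exp ((θ (Φ.symm (l+1)) (Φ.symm l) :ℂ) * Complex.I) * τ (Φ.symm l)‖^(2:ℕ) := by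
  classical
  set α : ZMod n → ℝ := fun l => θ (Φ.symm (l+1)) (Φ.symm l) with hα
  set s : ZMod n → ℝ := fun l => Complex.arg (τ (Φ.symm l)) with hs
  have hτe : ∀ l : ZMod n, τ (Φ.symm l) = Complex.exp ((s l :ℂ) * Complex.I) := by
    intro l
    have h6 := Complex.norm_mul_exp_arg_mul_I (τ (Φ.symm l))
    have habs : ‖τ (Φ.symm l)‖ = 1 := by
      exact hτ _
    rw [habs] at h6
    simpa using h6.symm
  set β : ZMod n → ℝ := fun l => α l + s l - s (l+1) with hβ
  have hterm : ∀ l : ZMod n, ‖τ (Φ.symm (l+1)) -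
      Complex.exp ((α l:ℂ) * Complex.I) * τ (Φ.symm l)‖^(2:ℕ)
      = 2 - 2 * Real.cos (β l) := by
    intro l
    rw [norm_exp_sub_exp (α l) (s (l+1)) (s l) _ _ (hτe (l+1)) (hτe l)]
    exact norm_one_sub_exp _
  have htel : ∑ l : ZMod n, β l = ∑ l : ZMod n, α l := by
    simp only [hβ]
    rw [Finset.sum_sub_distrib, Finset.sum_add_distrib]
    have h7 : ∑ l : ZMod n, s (l+1) = ∑ l : ZMod n, s l :=
      Equiv.sum_comp (Equiv.addRight (1 : ZMod n)) s
    rw [h7]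
    ring
  have hδ0 : 0 ≤ δ := hδ ▸ Dd_nonneg _
  have hδπ : δ ≤ Real.pi := hδ ▸ Dd_le_pi _
  have hsum : δ ≤ ∑ l : ZMod n, Dd (β l) := by
    rw [hδ, ← htel]
    exact Dd_sum_le _ _
  have hkey := key_ineq (Finset.univ : Finset (ZMod n)) (fun l => Dd (β l))
    (fun i _ => ⟨Dd_nonneg _, Dd_le_pi _⟩) δ hδ0 hδπ hsum
  rw [Finset.card_univ, ZMod.card n] at hkey
  have hc : ∀ l : ZMod n, Real.cos (Dd (β l)) = Real.cos (β l) := fun l => Dd_cos _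
  have hfin : ∑ l : ZMod n, (2 - 2 * Real.cos (β l))
      = 2 * ∑ l : ZMod n, (1 - Real.cos (Dd (β l))) := by
    rw [Finset.mul_sum]
    apply Finset.sum_congr rfl
    intro l _
    rw [hc l]
    ring
  calc (n:ℝ) * (2 - 2 * Real.cos (δ / n))
      = 2 * ((n:ℝ) * (1 - Real.cos (δ / n))) := by ring
    _ ≤ 2 * ∑ l : ZMod n, (1 - Real.cos (Dd (β l))) := by linarith
    _ = ∑ l : ZMod n, (2 - 2 * Real.cos (β l)) := hfin.symm
    _ = _ := by
        apply Finset.sum_congr rfl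
        intro l _
        exact (hterm l).symm

end Cycle
section Witness
variable (n : ℕ) [NeZero n] {Y : Type*} [Fintype Y]

lemma zmod_sum_range {M : Type*} [AddCommMonoid M] (f : ZMod n → M) :
    ∑ l : ZMod n, f l = ∑ j ∈ Finset.range n, f ((j : ℕ) : ZMod n) := by
  apply Finset.sum_nbij' (i := fun l => l.val) (j := fun j => ((j : ℕ) : ZMod n))
  · intro a _; exact Finset.mem_range.2 (ZMod.val_lt a)
  · intro a _; exact Finset.mem_univ _
  · intro a _; exact ZMod.natCast_rightInverse a
  · intro a ha; exact ZMod.val_cast_of_lt (Finset.mem_range.1 ha)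
  · intro a _; rw [ZMod.natCast_rightInverse a]

lemma val_succ_eq (l : ZMod n) (h : l.val + 1 < n) : (l + 1).val = l.val + 1 := by
  conv_lhs => rw [← ZMod.natCast_rightInverse l]
  rw [show ((l.val : ZMod n) + 1) = ((l.val + 1 : ℕ) : ZMod n) by push_cast; ring]
  exact ZMod.val_cast_of_lt h

lemma succ_eq_zero (l : ZMod n) (h : l.val + 1 = n) : l + 1 = 0 := by
  conv_lhs => rw [← ZMod.natCast_rightInverse l]
  rw [show ((l.val : ZMod n) + 1) = ((l.val + 1 : ℕ) : ZMod n) by push_cast; ring, h]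
  exact ZMod.natCast_self n

lemma cycle_witness (hn : 3 ≤ n) (Φ : Y ≃ ZMod n) (θ : Y → Y → ℝ) (F : ℝ) (M : ℤ)
    (hflux : F = -(∑ l : ZMod n, θ (Φ.symm (l+1)) (Φ.symm l)) + 2 * Real.pi * M) :
    ∃ τ : Y → ℂ, (∀ x : Y, ‖τ x‖ = 1) ∧
      ∀ l : ZMod n, ‖τ (Φ.symm (l+1)) -
          Complex.exp ((θ (Φ.symm (l+1)) (Φ.symm l) :ℂ) * Complex.I) * τ (Φ.symm l)‖^(2:ℕ)
        = 2 - 2 * Real.cos (Dd F / n) := by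
  have hn0 : 0 < n := by omega
  have hnR : (0:ℝ) < n := by exact_mod_cast hn0
  set α : ZMod n → ℝ := fun l => θ (Φ.symm (l+1)) (Φ.symm l) with hα
  set R : ℤ := round (F / (2 * Real.pi)) with hR
  set F' : ℝ := F - 2 * Real.pi * R with hF'
  set c : ℝ := -F'/n with hc
  set t : ZMod n → ℝ := fun l => ∑ j ∈ Finset.range l.val, (α ((j : ℕ) : ZMod n) - c) with ht
  refine ⟨fun x => Complex.exp ((t (Φ x) : ℂ) * Complex.I), fun x => norm_exp_real_mul_I _, ?_⟩
  intro l
  have hτs : ∀ j : ZMod n, Complex.exp ((t (Φ (Φ.symm j)) : ℂ) * Complex.I)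
      = Complex.exp ((t j : ℂ) * Complex.I) := by
    intro j; rw [Equiv.apply_symm_apply]
  simp only
  rw [hτs, hτs]
  rw [norm_exp_sub_exp (α l) (t (l+1)) (t l) _ _ rfl rfl]
  set β : ℝ := α l + t l - t (l+1) with hβ
  have hKc : ∃ K : ℤ, β = c + K * (2 * Real.pi) := by
    rcases lt_or_eq_of_le (Nat.succ_le_of_lt (ZMod.val_lt l)) with hlt | heq
    · -- l.val + 1 < n
      refine ⟨0, ?_⟩
      have hv : (l + 1).val = l.val + 1 := val_succ_eq n l hlt
      have ht1 : t (l+1) = t l + (α ((l.val : ℕ) : ZMod n) - c) := by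
        simp only [ht]; rw [hv, Finset.sum_range_succ]
      have hcast : ((l.val : ℕ) : ZMod n) = l := ZMod.natCast_rightInverse l
      rw [hβ, ht1, hcast]; ring
    · -- l.val + 1 = n
      refine ⟨M - R, ?_⟩
      have hz : l + 1 = 0 := succ_eq_zero n l heq
      have ht0 : t (l+1) = 0 := by rw [hz]; simp only [ht]; simp [ZMod.val_zero]
      have hsum : α l + ∑ j ∈ Finset.range l.val, α ((j : ℕ) : ZMod n)
          = ∑ l' : ZMod n, α l' := by
        have hrange : Finset.range n = Finset.range (l.val + 1) := by
          rw [show l.val + 1 = n from heq]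
        rw [zmod_sum_range n α, hrange, Finset.sum_range_succ,
            ZMod.natCast_rightInverse l]
        ring
      have htl : t l = (∑ j ∈ Finset.range l.val, α ((j : ℕ) : ZMod n)) - l.val * c := by
        simp only [ht]; rw [Finset.sum_sub_distrib, Finset.sum_const, Finset.card_range]
        simp [nsmul_eq_mul]
      have hval : (l.val : ℝ) = (n : ℝ) - 1 := by
        have : (l.val : ℝ) + 1 = n := by exact_mod_cast heq
        linarith
      have hSig : ∑ l' : ZMod n, α l' = -F + 2 * Real.pi * M := by rw [hflux]; ring
      rw [hβ, ht0, htl, sub_zero, ← add_sub_assoc, hsum, hSig, hval, hc, hF']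
      push_cast
      field_simp
      ring
  obtain ⟨K, hK⟩ := hKc
  rw [norm_one_sub_exp β]
  have hcosβ : Real.cos β = Real.cos c := by rw [hK, Real.cos_add_int_mul_two_pi]
  have hDdF : Dd F = |F'| := by rw [Dd, hF', hR]
  have hcosc : Real.cos c = Real.cos (Dd F / n) := by
    rw [hDdF, hc]
    rw [show |F'| / (n:ℝ) = |F' / n| by rw [abs_div, abs_of_pos hnR]]
    rw [Real.cos_abs, ← Real.cos_neg]
    congr 1; ring
  rw [hcosβ, hcosc]

end Witness


/-- for a magnetic cycle of length `n` with standard edge weights,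
`ι_{2,θ}(W) = n|1 − e^{iδ/n}|²` if `W = Y` and `0` otherwise, where `F` is a real
representative of the flux and `δ = min_{k∈ℤ} |F − 2kπ|`. -/
theorem frust_two_cycle (n : ℕ) [NeZero n] (hn : 3 ≤ n)
    {Y : Type*} [Fintype Y] (Φ : Y ≃ ZMod n)
    (b θ : Y → Y → ℝ) (m : Y → ℝ)
    (hb : ∀ x y, b x y = if (Φ x - Φ y = 1 ∨ Φ x - Φ y = -1) then 1 else 0)
    (hG : IsMagneticGraph b θ m)
    (F : ℝ)
    (hF : ∃ k : ℤ, F = (∑ j : ZMod n, θ (Φ.symm j) (Φ.symm (j + 1))) + 2 * Real.pi * k)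
    (δ : ℝ) (hδ : δ = sInf {d : ℝ | ∃ k : ℤ, d = |F - 2 * Real.pi * k|})
    (W : Finset Y) :
    frust b θ 2 W =
      if W = Finset.univ then
        (n : ℝ) * ‖(1 : ℂ) - Complex.exp (((δ / n : ℝ) : ℂ) * Complex.I)‖ ^ 2
      else 0 := by
  classical
  obtain ⟨hb0, hbsym, hbdiag, hbsum, hθanti, hmpos⟩ := hG
  have hn0 : 0 < n := by omega
  have hδD : δ = Dd F := by
    rw [hδ]
    apply le_antisymm
    · exact csInf_le ⟨0, by rintro d ⟨k, rfl⟩; exact abs_nonneg _⟩ (Dd_self_mem F)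
    · exact le_csInf ⟨_, Dd_self_mem F⟩ (by rintro d ⟨k, rfl⟩; exact Dd_le F k)
  set α : ZMod n → ℝ := fun l => θ (Φ.symm (l+1)) (Φ.symm l) with hα
  have hflux : ∃ M : ℤ, F = -(∑ l : ZMod n, α l) + 2 * Real.pi * M := by
    obtain ⟨k, hk⟩ := hF
    have hpair : ∀ l : ZMod n, ∃ mm : ℤ,
        θ (Φ.symm l) (Φ.symm (l+1)) = -α l + 2 * Real.pi * mm := by
      intro l
      obtain ⟨mm, hmm⟩ := hθanti (Φ.symm (l+1)) (Φ.symm l)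
      refine ⟨mm, ?_⟩
      simp only [hα]
      linarith
    choose mf hmf using hpair
    refine ⟨(∑ l : ZMod n, mf l) + k, ?_⟩
    rw [hk, Finset.sum_congr rfl (fun l _ => hmf l), Finset.sum_add_distrib]
    push_cast
    rw [Finset.sum_neg_distrib, ← Finset.mul_sum]
    ring
  have hDdα : Dd F = Dd (∑ l : ZMod n, α l) := by
    obtain ⟨M, hM⟩ := hflux
    rw [← Dd_neg (∑ l : ZMod n, α l)]
    exact Dd_eq_of F _ M hM
  have hnonneg : ∀ (τ : Y → ℂ), 0 ≤ (1 / 2) * ∑ x ∈ W, ∑ y ∈ W,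
      b x y * ‖τ x - Complex.exp ((θ x y : ℂ) * Complex.I) * τ y‖ ^ (2:ℝ) := by
    intro τ
    apply mul_nonneg (by norm_num)
    apply Finset.sum_nonneg; intro x _
    apply Finset.sum_nonneg; intro y _
    exact mul_nonneg (hb0 x y) (Real.rpow_nonneg (norm_nonneg _) _)
  unfold frust
  split_ifs with hW
  · subst hW
    have hred : ∀ τ : Y → ℂ,
        (1 / 2) * (∑ x ∈ (Finset.univ : Finset Y), ∑ y ∈ (Finset.univ : Finset Y),
          b x y * ‖τ x - Complex.exp ((θ x y : ℂ) * Complex.I) * τ y‖ ^ (2:ℝ))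
        = ∑ l : ZMod n, ‖τ (Φ.symm (l+1)) -
            Complex.exp ((θ (Φ.symm (l+1)) (Φ.symm l) : ℂ) * Complex.I) * τ (Φ.symm l)‖ ^ (2:ℕ) := by
      intro τ
      have h2 : ∀ x y : Y, b x y * ‖τ x - Complex.exp ((θ x y : ℂ) * Complex.I) * τ y‖ ^ (2:ℝ)
          = b x y * ‖τ x - Complex.exp ((θ x y : ℂ) * Complex.I) * τ y‖ ^ (2:ℕ) := by
        intro x y
        rw [show (2:ℝ) = ((2:ℕ):ℝ) by norm_num, Real.rpow_natCast]
      rw [Finset.sum_congr rfl (fun x _ => Finset.sum_congr rfl (fun y _ => h2 x y))]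
      rw [cycle_reduce n hn Φ b θ hb hθanti τ]
      ring
    apply le_antisymm
    · obtain ⟨M, hM⟩ := hflux
      obtain ⟨τ, hτu, hτe⟩ := cycle_witness n hn Φ θ F M hM
      apply csInf_le ⟨0, by rintro r ⟨τ', _, rfl⟩; exact hnonneg τ'⟩
      refine ⟨τ, fun x _ => hτu x, ?_⟩
      rw [hred τ, Finset.sum_congr rfl (fun l _ => hτe l), Finset.sum_const,
          Finset.card_univ, ZMod.card, nsmul_eq_mul, norm_one_sub_exp, hδD]
    · apply le_csInf
      · exact ⟨_, ⟨fun _ => (1:ℂ), fun x _ => by simp, rfl⟩⟩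
      rintro r ⟨τ, hτu, rfl⟩
      rw [hred τ, norm_one_sub_exp]
      exact cycle_lower n hn Φ θ τ (fun x => hτu x (Finset.mem_univ x)) δ (hδD.trans hDdα)
  · obtain ⟨v, hv⟩ : ∃ v : Y, v ∉ W := by
      by_contra h
      push_neg at h
      exact hW (Finset.eq_univ_iff_forall.2 h)
    set γ : ℕ → ℝ := fun j => θ (Φ.symm (Φ v + j + 1)) (Φ.symm (Φ v + j)) with hγ
    set g : ZMod n → ℝ := fun l => ∑ j ∈ Finset.range l.val, γ j with hg
    set τ : Y → ℂ := fun x => Complex.exp ((g (Φ x - Φ v) : ℂ) * Complex.I) with hτ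
    have hτu : ∀ x : Y, ‖τ x‖ = 1 := by
      intro x
      simp only [hτ]
      exact norm_exp_real_mul_I _
    have claim : ∀ x ∈ W, ∀ y ∈ W, Φ x - Φ y = 1 →
        τ x = Complex.exp ((θ x y : ℂ) * Complex.I) * τ y := by
      intro x hx y hy hxy
      set l : ZMod n := Φ y - Φ v with hl
      have hx1 : Φ x - Φ v = l + 1 := by rw [hl]; linear_combination hxy
      have hne : l + 1 ≠ 0 := by
        intro h0
        have h1 : Φ x = Φ v := by
          have h2 : Φ x - Φ v = 0 := by rw [hx1, h0]
          exact sub_eq_zero.1 h2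
        have hxv : x = v := Φ.injective h1
        rw [hxv] at hx
        exact hv hx
      have hlt : l.val + 1 < n := by
        rcases lt_or_eq_of_le (Nat.succ_le_of_lt (ZMod.val_lt l)) with h | h
        · exact h
        · exact absurd (succ_eq_zero n l h) hne
      have hv1 : (l+1).val = l.val + 1 := val_succ_eq n l hlt
      have hg1 : g (l+1) = g l + γ l.val := by
        simp only [hg]
        rw [hv1, Finset.sum_range_succ]
      have hγv : γ l.val = θ x y := by
        simp only [hγ]
        have hcast : ((l.val : ℕ) : ZMod n) = l := ZMod.natCast_rightInverse l
        rw [hcast]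
        have h1 : Φ v + l = Φ y := by rw [hl]; ring
        have h2 : Φ v + l + 1 = Φ x := by rw [hl]; linear_combination -hxy
        rw [h2, h1, Equiv.symm_apply_apply, Equiv.symm_apply_apply]
      simp only [hτ]
      rw [hx1, ← hl, hg1, hγv, exp_real_add]
      congr 1
      push_cast
      ring
    have hterm0 : ∀ x ∈ W, ∀ y ∈ W,
        b x y * ‖τ x - Complex.exp ((θ x y : ℂ) * Complex.I) * τ y‖ ^ (2:ℝ) = 0 := by
      intro x hx y hy
      rw [hb]
      split_ifs with hcond
      · rcases hcond with h1 | h2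
        · rw [claim x hx y hy h1, sub_self, norm_zero, Real.zero_rpow (by norm_num), mul_zero]
        · obtain ⟨k, hk⟩ := hθanti x y
          rw [norm_sym (θ x y) (θ y x) k hk (τ x) (τ y)]
          have h1 : Φ y - Φ x = 1 := by linear_combination -h2
          rw [claim y hy x hx h1, sub_self, norm_zero, Real.zero_rpow (by norm_num), mul_zero]
      · rw [zero_mul]
    have hzero : (1 / 2) * (∑ x ∈ W, ∑ y ∈ W,
        b x y * ‖τ x - Complex.exp ((θ x y : ℂ) * Complex.I) * τ y‖ ^ (2:ℝ)) = 0 := by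
      rw [Finset.sum_congr rfl (fun x hx => Finset.sum_eq_zero (hterm0 x hx))]
      simp
    apply le_antisymm
    · exact csInf_le ⟨0, by rintro r ⟨τ', _, rfl⟩; exact hnonneg τ'⟩
        ⟨τ, fun x _ => hτu x, hzero.symm⟩
    · apply le_csInf
      · exact ⟨_, ⟨τ, fun x _ => hτu x, rfl⟩⟩
      rintro r ⟨τ', hτ', rfl⟩
      exact hnonneg τ'
end
end

section
/- Let C = (b,θ,0,m) be a magnetic cycle of length l(C) over a finite set Y with standard edge weights. Then C is (a,0)₁-magnetic-sparse for some a > 0 if and only if F_θ(C) ≢ 0 (mod 2π), and in that case one can take a = 2l(C)/s_θ(C) − 1. Moreover, if l(C) is even, then C is (a,0)₁-bi-magnetic-sparse for some a > 0 if and only if F_θ(C) ≢ 0 (mod 2π); and if l(C) is odd, then C is (a,0)₁-bi-magnetic-sparse for some a > 0 if and only if F_θ(C) ≢ 0 (mod π). -/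
open Complex MeasureTheory
open scoped Classical

noncomputable section

variable {X : Type*}

section CycleHelpers

lemma cyc_sum_zmod_eq_range {n : ℕ} [NeZero n] (f : ZMod n → ℝ) :
    ∑ j : ZMod n, f j = ∑ l ∈ Finset.range n, f (l : ZMod n) := by
  refine Finset.sum_nbij' (fun j => j.val) (fun l => (l : ZMod n)) ?_ ?_ ?_ ?_ ?_
  · intro j _; exact Finset.mem_range.2 (ZMod.val_lt j)
  · intro l _; exact Finset.mem_univ _
  · intro j _; exact ZMod.natCast_rightInverse j
  · intro l hl; exact ZMod.val_cast_of_lt (Finset.mem_range.1 hl)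
  · intro j _; rw [ZMod.natCast_rightInverse j]

lemma cyc_expI_eq {a b : ℝ} {k : ℤ} (h : a = b + 2 * Real.pi * k) :
    Complex.exp ((a:ℂ) * Complex.I) = Complex.exp ((b:ℂ) * Complex.I) := by
  have : (a:ℂ) * Complex.I = (b:ℂ) * Complex.I + (k:ℂ) * (2 * Real.pi * Complex.I) := by
    push_cast [h]; ring
  rw [this, Complex.exp_add, Complex.exp_int_mul_two_pi_mul_I, mul_one]

lemma cyc_one_ne_neg_one {n : ℕ} [NeZero n] (hn : 3 ≤ n) : (1 : ZMod n) ≠ -1 := by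
  intro h
  have h2 : ((2:ℕ) : ZMod n) = 0 := by push_cast; linear_combination h
  have := Nat.le_of_dvd (by norm_num) ((ZMod.natCast_eq_zero_iff 2 n).1 h2)
  omega

lemma cyc_flux_exp_one (F : ℝ) :
    Complex.exp ((F:ℂ) * Complex.I) = 1 ↔ ∃ k : ℤ, F = 2 * Real.pi * k := by
  rw [Complex.exp_eq_one_iff]
  constructor
  · rintro ⟨k, hk⟩
    refine ⟨k, ?_⟩
    have h2 : (F:ℂ) = 2 * Real.pi * k := by
      have := mul_right_cancel₀ Complex.I_ne_zero
        (show (F:ℂ) * Complex.I = (2 * (Real.pi:ℂ) * k) * Complex.I by linear_combination hk)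
      exact this
    exact_mod_cast h2
  · rintro ⟨k, hk⟩
    exact ⟨k, by push_cast [hk]; ring⟩

variable {n : ℕ} [NeZero n] {Y : Type*} [Fintype Y]

lemma cyc_row_eq (hn : 3 ≤ n) (Φ : Y ≃ ZMod n) (b : Y → Y → ℝ)
    (hb : ∀ x y, b x y = if (Φ x - Φ y = 1 ∨ Φ x - Φ y = -1) then 1 else 0)
    (t : Y → Y → ℝ) (i : ZMod n) :
    ∑ j : ZMod n, b (Φ.symm i) (Φ.symm j) * t (Φ.symm i) (Φ.symm j)
      = t (Φ.symm i) (Φ.symm (i+1)) + t (Φ.symm i) (Φ.symm (i-1)) := by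
  have hne : i + 1 ≠ i - 1 := by
    intro h; exact cyc_one_ne_neg_one hn (by linear_combination h)
  have key : ∀ j : ZMod n, b (Φ.symm i) (Φ.symm j) * t (Φ.symm i) (Φ.symm j)
      = (if j = i + 1 then t (Φ.symm i) (Φ.symm (i+1)) else 0)
        + (if j = i - 1 then t (Φ.symm i) (Φ.symm (i-1)) else 0) := by
    intro j
    rw [hb]
    simp only [Equiv.apply_symm_apply]
    have c1 : (i - j = 1) ↔ (j = i - 1) := by constructor <;> intro h <;> linear_combination -h
    have c2 : (i - j = -1) ↔ (j = i + 1) := by constructor <;> intro h <;> linear_combination -h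
    simp only [c1, c2]
    by_cases h1 : j = i + 1 <;> by_cases h2 : j = i - 1 <;>
      simp [h1, h2] <;> first
      | (exact absurd (h1 ▸ h2 : i + 1 = i - 1) hne)
      | skip
    · subst h1; simp [hne]
    · subst h2; simp [Ne.symm hne]
  rw [Finset.sum_congr rfl (fun j _ => key j), Finset.sum_add_distrib,
    Finset.sum_ite_eq' Finset.univ, Finset.sum_ite_eq' Finset.univ]
  simp

lemma cyc_rowsum (hn : 3 ≤ n) (Φ : Y ≃ ZMod n) (b : Y → Y → ℝ)
    (hb : ∀ x y, b x y = if (Φ x - Φ y = 1 ∨ Φ x - Φ y = -1) then 1 else 0)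
    (x0 : Y) : ∑ y : Y, b x0 y = 2 := by
  have h := cyc_row_eq hn Φ b hb (fun _ _ => 1) (Φ x0)
  simp only [mul_one, Equiv.symm_apply_apply] at h
  rw [← Equiv.sum_comp Φ.symm (fun y => b x0 y)]
  rw [h]; norm_num

lemma cyc_double_sum_eq (hn : 3 ≤ n) (Φ : Y ≃ ZMod n) (b : Y → Y → ℝ)
    (hb : ∀ x y, b x y = if (Φ x - Φ y = 1 ∨ Φ x - Φ y = -1) then 1 else 0)
    (t : Y → Y → ℝ) :
    ∑ x : Y, ∑ y : Y, b x y * t x y =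
      (∑ j : ZMod n, t (Φ.symm j) (Φ.symm (j+1))) +
      (∑ j : ZMod n, t (Φ.symm (j+1)) (Φ.symm j)) := by
  have key : ∑ x : Y, ∑ y : Y, b x y * t x y
      = ∑ i : ZMod n, ∑ j : ZMod n, b (Φ.symm i) (Φ.symm j) * t (Φ.symm i) (Φ.symm j) := by
    rw [← Equiv.sum_comp Φ.symm (fun x => ∑ y : Y, b x y * t x y)]
    congr 1; ext i
    rw [← Equiv.sum_comp Φ.symm (fun y => b (Φ.symm i) y * t (Φ.symm i) y)]
  rw [key]
  simp_rw [cyc_row_eq hn Φ b hb t]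
  rw [Finset.sum_add_distrib]
  congr 1
  rw [← Equiv.sum_comp (Equiv.addRight (1:ZMod n)) (fun i => t (Φ.symm i) (Φ.symm (i-1)))]
  apply Finset.sum_congr rfl
  intro j _
  simp [Equiv.coe_addRight]

lemma cyc_telescope (u : ZMod n → ℂ) (φ : ZMod n → ℝ) :
    ‖u 0 - Complex.exp (((∑ j : ZMod n, φ j : ℝ) : ℂ) * Complex.I) * u 0‖ ≤
      ∑ j : ZMod n, ‖u j - Complex.exp ((φ j : ℂ) * Complex.I) * u (j+1)‖ := by
  have main : ∀ k : ℕ,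
      ‖u 0 - Complex.exp (((∑ l ∈ Finset.range k, φ (l:ZMod n) : ℝ):ℂ) * Complex.I) * u (k : ZMod n)‖
      ≤ ∑ l ∈ Finset.range k, ‖u (l:ZMod n) - Complex.exp ((φ (l:ZMod n) : ℂ) * Complex.I) * u ((l:ZMod n)+1)‖ := by
    intro k
    induction k with
    | zero => simp
    | succ k ih =>
      rw [Finset.sum_range_succ, Finset.sum_range_succ]
      set S := ∑ l ∈ Finset.range k, φ (l:ZMod n) with hS
      have cast1 : ((k+1 : ℕ) : ZMod n) = (k : ZMod n) + 1 := by push_cast; ring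
      rw [cast1]
      have key : ‖Complex.exp ((S:ℂ)*Complex.I) * u (k:ZMod n)
          - Complex.exp (((S + φ (k:ZMod n) : ℝ):ℂ) * Complex.I) * u ((k:ZMod n)+1)‖
          = ‖u (k:ZMod n) - Complex.exp ((φ (k:ZMod n):ℂ) * Complex.I) * u ((k:ZMod n)+1)‖ := by
        have e1 : Complex.exp (((S + φ (k:ZMod n) : ℝ):ℂ) * Complex.I)
            = Complex.exp ((S:ℂ)*Complex.I) * Complex.exp ((φ (k:ZMod n):ℂ)*Complex.I) := by
          rw [← Complex.exp_add]; congr 1; push_cast; ring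
        rw [e1, show Complex.exp ((S:ℂ)*Complex.I) * u (k:ZMod n)
          - Complex.exp ((S:ℂ)*Complex.I) * Complex.exp ((φ (k:ZMod n):ℂ)*Complex.I) * u ((k:ZMod n)+1)
          = Complex.exp ((S:ℂ)*Complex.I) * (u (k:ZMod n)
            - Complex.exp ((φ (k:ZMod n):ℂ)*Complex.I) * u ((k:ZMod n)+1)) by ring,
          norm_mul]
        simp [Complex.norm_exp_ofReal_mul_I]
      calc ‖u 0 - Complex.exp (((S + φ (k:ZMod n) : ℝ):ℂ) * Complex.I) * u ((k:ZMod n)+1)‖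
          ≤ ‖u 0 - Complex.exp ((S:ℂ)*Complex.I) * u (k:ZMod n)‖
            + ‖Complex.exp ((S:ℂ)*Complex.I) * u (k:ZMod n)
              - Complex.exp (((S + φ (k:ZMod n) : ℝ):ℂ) * Complex.I) * u ((k:ZMod n)+1)‖ :=
            norm_sub_le_norm_sub_add_norm_sub _ _ _
        _ ≤ _ := by rw [key]; exact add_le_add_left ih _
  have h := main n
  rw [ZMod.natCast_self] at h
  rw [cyc_sum_zmod_eq_range φ,
    cyc_sum_zmod_eq_range (fun j => ‖u j - Complex.exp ((φ j : ℂ) * Complex.I) * u (j+1)‖)]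
  exact h

lemma cyc_crossing (Φ : Y ≃ ZMod n) (W : Finset Y) (hW : W.Nonempty) (hWne : W ≠ Finset.univ) :
    (∃ j : ZMod n, Φ.symm j ∈ W ∧ Φ.symm (j+1) ∉ W) ∧
    (∃ j : ZMod n, Φ.symm (j+1) ∈ W ∧ Φ.symm j ∉ W) := by
  obtain ⟨w, hw⟩ := hW
  constructor
  · by_contra hcon
    push_neg at hcon
    have step : ∀ k : ℕ, Φ.symm (Φ w + k) ∈ W := by
      intro k
      induction k with
      | zero => simpa using hw
      | succ k ih =>
        have : (Φ w + (k+1 : ℕ) : ZMod n) = (Φ w + (k:ℕ)) + 1 := by push_cast; ring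
        rw [this]
        exact hcon _ ih
    apply hWne
    rw [Finset.eq_univ_iff_forall]
    intro y
    have : Φ.symm (Φ w + ((Φ y - Φ w).val : ℕ)) = y := by
      rw [ZMod.natCast_rightInverse]
      rw [show Φ w + (Φ y - Φ w) = Φ y by ring, Equiv.symm_apply_apply]
    rw [← this]
    exact step _
  · by_contra hcon
    push_neg at hcon
    have step : ∀ k : ℕ, Φ.symm (Φ w - k) ∈ W := by
      intro k
      induction k with
      | zero => simpa using hw
      | succ k ih =>
        apply hcon (Φ w - (k+1 : ℕ))
        have : (Φ w - (k+1 : ℕ) : ZMod n) + 1 = Φ w - (k:ℕ) := by push_cast; ring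
        rw [this]
        exact ih
    apply hWne
    rw [Finset.eq_univ_iff_forall]
    intro y
    have : Φ.symm (Φ w - ((Φ w - Φ y).val : ℕ)) = y := by
      rw [ZMod.natCast_rightInverse]
      rw [show Φ w - (Φ w - Φ y) = Φ y by ring, Equiv.symm_apply_apply]
    rw [← this]
    exact step _

lemma cyc_boundary_ge_two (hn : 3 ≤ n) (Φ : Y ≃ ZMod n) (b : Y → Y → ℝ)
    (hb : ∀ x y, b x y = if (Φ x - Φ y = 1 ∨ Φ x - Φ y = -1) then 1 else 0)
    (W : Finset Y) (hW : W.Nonempty) (hWne : W ≠ Finset.univ) :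
    2 ≤ ∑ x ∈ W, ∑ y ∈ Wᶜ, b x y := by
  have hb0 : ∀ x y, 0 ≤ b x y := by
    intro x y; rw [hb]; split <;> norm_num
  obtain ⟨⟨j1, hj1, hj1'⟩, ⟨j2, hj2, hj2'⟩⟩ := cyc_crossing Φ W hW hWne
  set p1 : Y × Y := (Φ.symm j1, Φ.symm (j1+1)) with hp1
  set p2 : Y × Y := (Φ.symm (j2+1), Φ.symm j2) with hp2
  have hne : p1 ≠ p2 := by
    intro h
    have e1 : j1 = j2 + 1 := Φ.symm.injective (congrArg Prod.fst h)
    have e2 : j1 + 1 = j2 := Φ.symm.injective (congrArg Prod.snd h)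
    exact cyc_one_ne_neg_one hn (by linear_combination e2 - e1)
  have hv1 : b p1.1 p1.2 = 1 := by
    rw [hb]
    simp only [hp1, Equiv.apply_symm_apply]
    rw [if_pos (Or.inr (by ring))]
  have hv2 : b p2.1 p2.2 = 1 := by
    rw [hb]
    simp only [hp2, Equiv.apply_symm_apply]
    rw [if_pos (Or.inl (by ring))]
  have hsub : ({p1, p2} : Finset (Y × Y)) ⊆ W ×ˢ Wᶜ := by
    intro p hp
    rcases Finset.mem_insert.1 hp with h | h
    · subst h; exact Finset.mem_product.2 ⟨hj1, Finset.mem_compl.2 hj1'⟩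
    · rw [Finset.mem_singleton.1 h]
      exact Finset.mem_product.2 ⟨hj2, Finset.mem_compl.2 hj2'⟩
  calc (2:ℝ) = ∑ p ∈ ({p1, p2} : Finset (Y × Y)), b p.1 p.2 := by
        rw [Finset.sum_pair hne, hv1, hv2]; norm_num
    _ ≤ ∑ p ∈ W ×ˢ Wᶜ, b p.1 p.2 :=
        Finset.sum_le_sum_of_subset_of_nonneg hsub (fun p _ _ => hb0 p.1 p.2)
    _ = ∑ x ∈ W, ∑ y ∈ Wᶜ, b x y := by rw [Finset.sum_product]

end CycleHelpers

section CycleMain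

lemma cyc_frust_nonneg {Y : Type*} (b θ : Y → Y → ℝ) (hb0 : ∀ x y, 0 ≤ b x y)
    (p : ℝ) (W : Finset Y) : 0 ≤ frust b θ p W := by
  apply Real.sInf_nonneg
  rintro r ⟨τ, _, rfl⟩
  have : (0:ℝ) ≤ ∑ x ∈ W, ∑ y ∈ W,
      b x y * ‖τ x - Complex.exp ((θ x y : ℂ) * Complex.I) * τ y‖ ^ p :=
    Finset.sum_nonneg fun x _ => Finset.sum_nonneg fun y _ =>
      mul_nonneg (hb0 x y) (Real.rpow_nonneg (norm_nonneg _) p)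
  linarith

lemma cyc_bBoundary_eq {Y : Type*} [Fintype Y] (b : Y → Y → ℝ)
    (hsym : ∀ x y, b x y = b y x) (W : Finset Y) :
    bBoundary b W = 2 * ∑ x ∈ W, ∑ y ∈ Wᶜ, b x y := by
  have h1 : ∀ x : Y, (∑' y : {y : Y // y ∉ W}, b x ↑y) = ∑ y ∈ Wᶜ, b x y := by
    intro x
    rw [tsum_fintype]
    exact (Finset.sum_subtype Wᶜ (fun y => Finset.mem_compl) (fun y => b x y)).symm
  have h2 : ∀ y : Y, (∑' x : {x : Y // x ∉ W}, b ↑x y) = ∑ x ∈ Wᶜ, b x y := by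
    intro y
    rw [tsum_fintype]
    exact (Finset.sum_subtype Wᶜ (fun x => Finset.mem_compl) (fun x => b x y)).symm
  unfold bBoundary
  simp_rw [h1, h2]
  have h3 : ∑ y ∈ W, ∑ x ∈ Wᶜ, b x y = ∑ x ∈ W, ∑ y ∈ Wᶜ, b x y :=
    Finset.sum_congr rfl (fun y _ => Finset.sum_congr rfl (fun x _ => hsym x y))
  rw [h3]; ring

lemma cyc_bBoundary_nonneg {Y : Type*} [Fintype Y] (b : Y → Y → ℝ) (hb0 : ∀ x y, 0 ≤ b x y)
    (hsym : ∀ x y, b x y = b y x) (W : Finset Y) : 0 ≤ bBoundary b W := by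
  rw [cyc_bBoundary_eq b hsym W]
  have : (0:ℝ) ≤ ∑ x ∈ W, ∑ y ∈ Wᶜ, b x y :=
    Finset.sum_nonneg (fun x _ => Finset.sum_nonneg (fun y _ => hb0 x y))
  linarith

variable {n : ℕ} [NeZero n] {Y : Type*} [Fintype Y]

lemma cyc_sum_W_eq (hn : 3 ≤ n) (Φ : Y ≃ ZMod n) (b : Y → Y → ℝ)
    (hb : ∀ x y, b x y = if (Φ x - Φ y = 1 ∨ Φ x - Φ y = -1) then 1 else 0)
    (W : Finset Y) :
    ∑ x ∈ W, ∑ y ∈ W, b x y = 2 * W.card - ∑ x ∈ W, ∑ y ∈ Wᶜ, b x y := by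
  have key : ∀ x ∈ W, ∑ y ∈ W, b x y + ∑ y ∈ Wᶜ, b x y = 2 := by
    intro x _
    rw [Finset.sum_add_sum_compl]
    exact cyc_rowsum hn Φ b hb x
  have h := Finset.sum_congr rfl key
  rw [Finset.sum_add_distrib] at h
  rw [Finset.sum_const, nsmul_eq_mul] at h
  linarith

lemma cyc_sym_term (θ : Y → Y → ℝ)
    (hθ : ∀ x y, ∃ k : ℤ, θ x y + θ y x = 2 * Real.pi * k) (τ : Y → ℂ) (x y : Y) :
    ‖τ y - Complex.exp ((θ y x : ℂ) * Complex.I) * τ x‖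
      = ‖τ x - Complex.exp ((θ x y : ℂ) * Complex.I) * τ y‖ := by
  obtain ⟨k, hk⟩ := hθ x y
  have e : Complex.exp ((θ y x : ℂ) * Complex.I)
      = Complex.exp (((-(θ x y) : ℝ) : ℂ) * Complex.I) :=
    cyc_expI_eq (by linarith)
  rw [e]
  have h1 : Complex.exp ((θ x y : ℂ) * Complex.I)
      * Complex.exp (((-(θ x y) : ℝ) : ℂ) * Complex.I) = 1 := by
    rw [← Complex.exp_add]
    convert Complex.exp_zero using 2
    push_cast; ring
  calc ‖τ y - Complex.exp (((-(θ x y) : ℝ) : ℂ) * Complex.I) * τ x‖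
      = ‖Complex.exp ((θ x y : ℂ) * Complex.I)‖
        * ‖τ y - Complex.exp (((-(θ x y) : ℝ) : ℂ) * Complex.I) * τ x‖ := by
        have hexp : ‖Complex.exp ((θ x y : ℂ) * Complex.I)‖ = 1 := by
          exact Complex.norm_exp_ofReal_mul_I _
        rw [hexp, one_mul]
    _ = ‖Complex.exp ((θ x y : ℂ) * Complex.I) * τ y
        - Complex.exp ((θ x y : ℂ) * Complex.I)
          * Complex.exp (((-(θ x y) : ℝ) : ℂ) * Complex.I) * τ x‖ := by
        rw [← norm_mul]; congr 1; ring
    _ = ‖Complex.exp ((θ x y : ℂ) * Complex.I) * τ y - τ x‖ := by rw [h1, one_mul]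
    _ = ‖τ x - Complex.exp ((θ x y : ℂ) * Complex.I) * τ y‖ := norm_sub_rev _ _

lemma cyc_frust_univ_ge (hn : 3 ≤ n) (Φ : Y ≃ ZMod n) (b θ : Y → Y → ℝ)
    (hb : ∀ x y, b x y = if (Φ x - Φ y = 1 ∨ Φ x - Φ y = -1) then 1 else 0)
    (hθ : ∀ x y, ∃ k : ℤ, θ x y + θ y x = 2 * Real.pi * k)
    (F : ℝ) (hF : F = ∑ j : ZMod n, θ (Φ.symm j) (Φ.symm (j + 1))) :
    ‖(1:ℂ) - Complex.exp ((F : ℂ) * Complex.I)‖ ≤ frust b θ 1 Finset.univ := by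
  unfold frust
  apply le_csInf
  · exact ⟨(1/2) * ∑ x ∈ Finset.univ, ∑ y ∈ Finset.univ,
      b x y * ‖(fun _ : Y => (1:ℂ)) x - Complex.exp ((θ x y : ℂ) * Complex.I)
        * (fun _ : Y => (1:ℂ)) y‖ ^ (1:ℝ),
      (fun _ => 1), fun x _ => norm_one, rfl⟩
  · rintro r ⟨τ, hτ, rfl⟩
    have hτ' : ∀ x : Y, ‖τ x‖ = 1 := fun x => hτ x (Finset.mem_univ x)
    have hrw : ∀ x y : Y, b x y * ‖τ x - Complex.exp ((θ x y : ℂ) * Complex.I) * τ y‖ ^ (1:ℝ)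
        = b x y * ‖τ x - Complex.exp ((θ x y : ℂ) * Complex.I) * τ y‖ := by
      intro x y; rw [Real.rpow_one]
    simp_rw [hrw]
    rw [cyc_double_sum_eq hn Φ b hb
      (fun x y => ‖τ x - Complex.exp ((θ x y : ℂ) * Complex.I) * τ y‖)]
    have hBA : ∑ j : ZMod n, ‖τ (Φ.symm (j+1))
          - Complex.exp ((θ (Φ.symm (j+1)) (Φ.symm j) : ℂ) * Complex.I) * τ (Φ.symm j)‖
        = ∑ j : ZMod n, ‖τ (Φ.symm j)
          - Complex.exp ((θ (Φ.symm j) (Φ.symm (j+1)) : ℂ) * Complex.I) * τ (Φ.symm (j+1))‖ :=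
      Finset.sum_congr rfl fun j _ => cyc_sym_term θ hθ τ (Φ.symm j) (Φ.symm (j+1))
    rw [hBA]
    have htel := cyc_telescope (fun j => τ (Φ.symm j)) (fun j => θ (Φ.symm j) (Φ.symm (j+1)))
    simp only [← hF] at htel
    have hlhs : ‖τ (Φ.symm 0) - Complex.exp ((F:ℂ) * Complex.I) * τ (Φ.symm 0)‖
        = ‖(1:ℂ) - Complex.exp ((F : ℂ) * Complex.I)‖ := by
      rw [show τ (Φ.symm 0) - Complex.exp ((F:ℂ) * Complex.I) * τ (Φ.symm 0)
          = ((1:ℂ) - Complex.exp ((F:ℂ) * Complex.I)) * τ (Φ.symm 0) by ring,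
        norm_mul, hτ', mul_one]
    rw [hlhs] at htel
    linarith

lemma cyc_frust_univ_nonpos (hn : 3 ≤ n) (Φ : Y ≃ ZMod n) (b θ : Y → Y → ℝ)
    (hb : ∀ x y, b x y = if (Φ x - Φ y = 1 ∨ Φ x - Φ y = -1) then 1 else 0)
    (hθ : ∀ x y, ∃ k : ℤ, θ x y + θ y x = 2 * Real.pi * k)
    (F : ℝ) (hF : F = ∑ j : ZMod n, θ (Φ.symm j) (Φ.symm (j + 1)))
    (k₀ : ℤ) (hFk : F = 2 * Real.pi * k₀) :
    frust b θ 1 Finset.univ ≤ 0 := by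
  have hb0 : ∀ x y, 0 ≤ b x y := by
    intro x y; rw [hb]; split <;> norm_num
  set φ : ZMod n → ℝ := fun j => θ (Φ.symm j) (Φ.symm (j+1)) with hφ
  set S : ℕ → ℝ := fun k => ∑ l ∈ Finset.range k, φ (l : ZMod n) with hSdef
  set τ : Y → ℂ := fun y => Complex.exp (((-(S ((Φ y).val)) : ℝ) : ℂ) * Complex.I) with hτdef
  have hτ1 : ∀ x : Y, ‖τ x‖ = 1 := by
    intro x
    rw [hτdef]
    simp only []
    rw [Complex.norm_exp_ofReal_mul_I]
  have hSn : S n = F := by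
    rw [hF, cyc_sum_zmod_eq_range]
  have star : ∀ j : ZMod n,
      Complex.exp (((-(S j.val) : ℝ) : ℂ) * Complex.I)
        = Complex.exp ((φ j : ℂ) * Complex.I)
          * Complex.exp (((-(S ((j+1).val)) : ℝ) : ℂ) * Complex.I) := by
    intro j
    have hjcast : ((j.val : ℕ) : ZMod n) = j := ZMod.natCast_rightInverse j
    have hstep : S (j.val + 1) = S j.val + φ j := by
      rw [hSdef]
      simp only []
      rw [Finset.sum_range_succ, hjcast]
    rcases Nat.lt_or_ge (j.val + 1) n with hlt | hge
    · have hval : (j + 1).val = j.val + 1 := by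
        have : j + 1 = ((j.val + 1 : ℕ) : ZMod n) := by
          push_cast [hjcast]; ring
        rw [this, ZMod.val_cast_of_lt hlt]
      rw [hval, hstep, ← Complex.exp_add]
      congr 1
      push_cast; ring
    · have hn1 : j.val + 1 = n := by
        have := ZMod.val_lt j; omega
      have hval : (j + 1) = (0 : ZMod n) := by
        have : j + 1 = ((j.val + 1 : ℕ) : ZMod n) := by
          push_cast [hjcast]; ring
        rw [this, hn1, ZMod.natCast_self]
      rw [hval, ZMod.val_zero]
      have hS0 : S 0 = 0 := by rw [hSdef]; simp
      rw [hS0]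
      have hφj : -(S j.val) = φ j + 2 * Real.pi * ((-k₀ : ℤ) : ℝ) := by
        have : S j.val + φ j = 2 * Real.pi * k₀ := by
          rw [← hstep, hn1, hSn, hFk]
        push_cast
        linarith
      rw [cyc_expI_eq hφj]
      norm_num
  have hmem : (0:ℝ) ∈ {r : ℝ | ∃ τ' : Y → ℂ, (∀ x ∈ (Finset.univ : Finset Y), ‖τ' x‖ = 1) ∧
      r = (1 / 2) * ∑ x ∈ Finset.univ, ∑ y ∈ Finset.univ,
        b x y * ‖τ' x - Complex.exp ((θ x y : ℂ) * Complex.I) * τ' y‖ ^ (1:ℝ)} := by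
    refine ⟨τ, fun x _ => hτ1 x, ?_⟩
    have hrw : ∀ x y : Y, b x y * ‖τ x - Complex.exp ((θ x y : ℂ) * Complex.I) * τ y‖ ^ (1:ℝ)
        = b x y * ‖τ x - Complex.exp ((θ x y : ℂ) * Complex.I) * τ y‖ := by
      intro x y; rw [Real.rpow_one]
    simp_rw [hrw]
    rw [cyc_double_sum_eq hn Φ b hb
      (fun x y => ‖τ x - Complex.exp ((θ x y : ℂ) * Complex.I) * τ y‖)]
    have hτval : ∀ j : ZMod n, τ (Φ.symm j) = Complex.exp (((-(S j.val) : ℝ) : ℂ) * Complex.I) := by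
      intro j
      rw [hτdef]
      simp only [Equiv.apply_symm_apply]
    have t1 : ∀ j : ZMod n, ‖τ (Φ.symm j)
        - Complex.exp ((θ (Φ.symm j) (Φ.symm (j+1)) : ℂ) * Complex.I) * τ (Φ.symm (j+1))‖ = 0 := by
      intro j
      rw [hτval j, hτval (j+1), norm_eq_zero, sub_eq_zero]
      exact star j
    have t2 : ∀ j : ZMod n, ‖τ (Φ.symm (j+1))
        - Complex.exp ((θ (Φ.symm (j+1)) (Φ.symm j) : ℂ) * Complex.I) * τ (Φ.symm j)‖ = 0 := by
      intro j
      obtain ⟨k₁, hk₁⟩ := hθ (Φ.symm j) (Φ.symm (j+1))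
      have e : Complex.exp ((θ (Φ.symm (j+1)) (Φ.symm j) : ℂ) * Complex.I)
          = Complex.exp (((-(φ j) : ℝ) : ℂ) * Complex.I) := by
        apply cyc_expI_eq (k := k₁)
        rw [hφ]
        simp only []
        linarith
      rw [hτval j, hτval (j+1), e, norm_eq_zero, sub_eq_zero]
      rw [star j, ← mul_assoc, ← Complex.exp_add]
      have : Complex.exp (((-(φ j) : ℝ) : ℂ) * Complex.I + (φ j : ℂ) * Complex.I) = 1 := by
        convert Complex.exp_zero using 2
        push_cast; ring
      rw [this, one_mul]
    rw [Finset.sum_congr rfl (fun j _ => t1 j), Finset.sum_congr rfl (fun j _ => t2 j)]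
    simp
  unfold frust
  have hbdd : BddBelow {r : ℝ | ∃ τ' : Y → ℂ, (∀ x ∈ (Finset.univ : Finset Y), ‖τ' x‖ = 1) ∧
      r = (1 / 2) * ∑ x ∈ Finset.univ, ∑ y ∈ Finset.univ,
        b x y * ‖τ' x - Complex.exp ((θ x y : ℂ) * Complex.I) * τ' y‖ ^ (1:ℝ)} := by
    refine ⟨0, ?_⟩
    rintro r ⟨τ', _, rfl⟩
    have : (0:ℝ) ≤ ∑ x ∈ Finset.univ, ∑ y ∈ Finset.univ,
        b x y * ‖τ' x - Complex.exp ((θ x y : ℂ) * Complex.I) * τ' y‖ ^ (1:ℝ) :=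
      Finset.sum_nonneg fun x _ => Finset.sum_nonneg fun y _ =>
        mul_nonneg (hb0 x y) (Real.rpow_nonneg (norm_nonneg _) _)
    linarith
  exact csInf_le hbdd hmem
end CycleMain

section CycleSparse

variable {n : ℕ} [NeZero n] {Y : Type*} [Fintype Y]

lemma cyc_bsym (Φ : Y ≃ ZMod n) (b : Y → Y → ℝ)
    (hb : ∀ x y, b x y = if (Φ x - Φ y = 1 ∨ Φ x - Φ y = -1) then 1 else 0) :
    ∀ x y, b x y = b y x := by
  intro x y
  rw [hb, hb]
  have : (Φ x - Φ y = 1 ∨ Φ x - Φ y = -1) ↔ (Φ y - Φ x = 1 ∨ Φ y - Φ x = -1) := by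
    constructor
    · rintro (h | h)
      · exact Or.inr (by linear_combination -h)
      · exact Or.inl (by linear_combination -h)
    · rintro (h | h)
      · exact Or.inr (by linear_combination -h)
      · exact Or.inl (by linear_combination -h)
  simp only [this]

lemma cyc_b_nonneg (Φ : Y ≃ ZMod n) (b : Y → Y → ℝ)
    (hb : ∀ x y, b x y = if (Φ x - Φ y = 1 ∨ Φ x - Φ y = -1) then 1 else 0) :
    ∀ x y, 0 ≤ b x y := by
  intro x y; rw [hb]; split <;> norm_num

lemma cyc_sparse_main (hn : 3 ≤ n) (Φ : Y ≃ ZMod n) (b θ : Y → Y → ℝ) (m : Y → ℝ)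
    (hb : ∀ x y, b x y = if (Φ x - Φ y = 1 ∨ Φ x - Φ y = -1) then 1 else 0)
    (hθ : ∀ x y, ∃ k : ℤ, θ x y + θ y x = 2 * Real.pi * k)
    (F : ℝ) (hF : F = ∑ j : ZMod n, θ (Φ.symm j) (Φ.symm (j + 1)))
    (hs : Complex.exp ((F : ℂ) * Complex.I) ≠ 1) :
    MagSparse b θ (fun _ => 0) m 1
      (2 * n / ‖(1 : ℂ) - Complex.exp ((F : ℂ) * Complex.I)‖ - 1) 0 := by
  have hb0 := cyc_b_nonneg Φ b hb
  have hbsym := cyc_bsym Φ b hb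
  set s := ‖(1 : ℂ) - Complex.exp ((F : ℂ) * Complex.I)‖ with hsdef
  have hs0 : 0 < s := norm_pos_iff.2 (sub_ne_zero.2 (Ne.symm hs))
  have hs2 : s ≤ 2 := by
    have h1 : ‖Complex.exp ((F:ℂ) * Complex.I)‖ = 1 := by
      exact Complex.norm_exp_ofReal_mul_I _
    calc s ≤ ‖(1:ℂ)‖ + ‖Complex.exp ((F:ℂ) * Complex.I)‖ := norm_sub_le _ _
      _ = 2 := by rw [norm_one, h1]; norm_num
  have hcard : ((Fintype.card Y : ℕ) : ℝ) = (n : ℝ) := by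
    rw [Fintype.card_congr Φ, ZMod.card]
  have hn3 : (3:ℝ) ≤ (n:ℝ) := by exact_mod_cast hn
  set a : ℝ := 2 * n / s - 1 with hadef
  have hdiv : (n:ℝ) ≤ 2 * n / s := by
    rw [le_div_iff₀ hs0]; nlinarith
  have ha1 : (n:ℝ) - 1 ≤ a := by rw [hadef]; linarith
  have ha0 : 0 ≤ a := by linarith
  intro W
  simp only [max_self, zero_mul, mul_zero, Finset.sum_const_zero, add_zero]
  have hfr0 : 0 ≤ frust b θ 1 W := cyc_frust_nonneg b θ hb0 1 W
  by_cases hWu : W = Finset.univ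
  · subst hWu
    have hLHS : ∑ x ∈ Finset.univ, ∑ y ∈ Finset.univ, b x y = 2 * (n:ℝ) := by
      rw [Finset.sum_congr rfl (fun x _ => cyc_rowsum hn Φ b hb x), Finset.sum_const,
        nsmul_eq_mul, Finset.card_univ, hcard]
      ring
    have hfr : s ≤ frust b θ 1 Finset.univ := cyc_frust_univ_ge hn Φ b θ hb hθ F hF
    have hBd : bBoundary b Finset.univ = 0 := by
      rw [cyc_bBoundary_eq b hbsym]
      simp
    rw [hLHS, hBd]
    simp only [mul_zero, add_zero]
    have h1a : (1:ℝ) + a = 2 * n / s := by rw [hadef]; ring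
    have key : 2 * (n:ℝ) ≤ (1 + a) * frust b θ 1 Finset.univ := by
      rw [h1a]
      calc 2 * (n:ℝ) = (2 * n / s) * s := by field_simp
        _ ≤ (2 * n / s) * frust b θ 1 Finset.univ := by
            apply mul_le_mul_of_nonneg_left hfr
            positivity
    linarith
  · by_cases hWe : W = ∅
    · subst hWe
      have hBd : bBoundary b ∅ = 0 := by
        rw [cyc_bBoundary_eq b hbsym]; simp
      rw [hBd]
      simp only [Finset.sum_empty, mul_zero, add_zero]
      have h1 : 0 ≤ (1 + a) * frust b θ 1 ∅ := mul_nonneg (by linarith) hfr0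
      linarith
    · have hWne : W.Nonempty := Finset.nonempty_iff_ne_empty.2 hWe
      set D := ∑ x ∈ W, ∑ y ∈ Wᶜ, b x y with hD
      have hLHS := cyc_sum_W_eq hn Φ b hb W
      have hD2 : 2 ≤ D := cyc_boundary_ge_two hn Φ b hb W hWne hWu
      have hBd : bBoundary b W = 2 * D := cyc_bBoundary_eq b hbsym W
      have hcW : (W.card : ℝ) ≤ (n : ℝ) := by
        rw [← hcard]
        exact_mod_cast Finset.card_le_univ W
      rw [hLHS, hBd]
      have hre : a * (1 / 2 * (2 * D)) = a * D := by ring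
      rw [hre]
      have h1 : 0 ≤ (1 + a) * frust b θ 1 W := mul_nonneg (by linarith) hfr0
      have h2 : ((n:ℝ) - 1) * 2 ≤ a * D := by
        calc ((n:ℝ) - 1) * 2 ≤ ((n:ℝ) - 1) * D :=
              mul_le_mul_of_nonneg_left hD2 (by linarith)
          _ ≤ a * D := mul_le_mul_of_nonneg_right ha1 (by linarith)
      linarith

lemma cyc_not_sparse_main (hn : 3 ≤ n) (Φ : Y ≃ ZMod n) (b θ : Y → Y → ℝ) (m : Y → ℝ)
    (hb : ∀ x y, b x y = if (Φ x - Φ y = 1 ∨ Φ x - Φ y = -1) then 1 else 0)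
    (hθ : ∀ x y, ∃ k : ℤ, θ x y + θ y x = 2 * Real.pi * k)
    (F : ℝ) (hF : F = ∑ j : ZMod n, θ (Φ.symm j) (Φ.symm (j + 1)))
    (k₀ : ℤ) (hFk : F = 2 * Real.pi * k₀) {a : ℝ} (ha : 0 < a) :
    ¬ MagSparse b θ (fun _ => 0) m 1 a 0 := by
  intro hsp
  have hb0 := cyc_b_nonneg Φ b hb
  have hbsym := cyc_bsym Φ b hb
  have h := hsp Finset.univ
  simp only [max_self, zero_mul, mul_zero, Finset.sum_const_zero, add_zero] at h
  have hcard : ((Fintype.card Y : ℕ) : ℝ) = (n : ℝ) := by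
    rw [Fintype.card_congr Φ, ZMod.card]
  have hLHS : ∑ x ∈ Finset.univ, ∑ y ∈ Finset.univ, b x y = 2 * (n:ℝ) := by
    rw [Finset.sum_congr rfl (fun x _ => cyc_rowsum hn Φ b hb x), Finset.sum_const,
      nsmul_eq_mul, Finset.card_univ, hcard]
    ring
  have hBd : bBoundary b Finset.univ = 0 := by
    rw [cyc_bBoundary_eq b hbsym]; simp
  have hfr : frust b θ 1 Finset.univ ≤ 0 :=
    cyc_frust_univ_nonpos hn Φ b θ hb hθ F hF k₀ hFk
  have hfr' : (1 + a) * frust b θ 1 Finset.univ ≤ 0 :=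
    mul_nonpos_of_nonneg_of_nonpos (by linarith) hfr
  rw [hLHS, hBd] at h
  simp only [mul_zero, add_zero] at h
  have hn3 : (3:ℝ) ≤ (n:ℝ) := by exact_mod_cast hn
  linarith

lemma cyc_mono {Y : Type*} [Fintype Y] (b θ : Y → Y → ℝ) (m : Y → ℝ)
    (hb0 : ∀ x y, 0 ≤ b x y) (hbsym : ∀ x y, b x y = b y x)
    {a a' : ℝ} (h0 : 0 ≤ a) (h : a ≤ a')
    (hsp : MagSparse b θ (fun _ => 0) m 1 a 0) :
    MagSparse b θ (fun _ => 0) m 1 a' 0 := by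
  intro W
  have hW := hsp W
  simp only [max_self, zero_mul, mul_zero, Finset.sum_const_zero, add_zero] at hW ⊢
  have h1 : 0 ≤ frust b θ 1 W := cyc_frust_nonneg b θ hb0 1 W
  have h2 : 0 ≤ bBoundary b W := cyc_bBoundary_nonneg b hb0 hbsym W
  nlinarith [mul_nonneg (sub_nonneg.2 h) h1, mul_nonneg (sub_nonneg.2 h) h2]

end CycleSparse

/-- a magnetic cycle of length `n` with standard edge weights is
`(a,0)₁`-magnetic-sparse for some `a > 0` iff the flux `F` is not `≡ 0 (mod 2π)`, in
which case `a = 2n/s_θ(C) − 1` works; moreover, for even `n` it is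
`(a,0)₁`-bi-magnetic-sparse for some `a > 0` iff `F ≢ 0 (mod 2π)`, and for odd `n`
iff `F ≢ 0 (mod π)`. -/
theorem cycle_sparse (n : ℕ) [NeZero n] (hn : 3 ≤ n)
    {Y : Type*} [Fintype Y] (Φ : Y ≃ ZMod n)
    (b θ : Y → Y → ℝ) (m : Y → ℝ)
    (hb : ∀ x y, b x y = if (Φ x - Φ y = 1 ∨ Φ x - Φ y = -1) then 1 else 0)
    (hG : IsMagneticGraph b θ m)
    (F : ℝ) (hF : F = ∑ j : ZMod n, θ (Φ.symm j) (Φ.symm (j + 1))) :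
    ((∃ a > (0 : ℝ), MagSparse b θ (fun _ => 0) m 1 a 0) ↔
        ¬ ∃ k : ℤ, F = 2 * Real.pi * k) ∧
    ((¬ ∃ k : ℤ, F = 2 * Real.pi * k) →
        MagSparse b θ (fun _ => 0) m 1
          (2 * n / ‖(1 : ℂ) - Complex.exp ((F : ℂ) * Complex.I)‖ - 1) 0) ∧
    (Even n →
      ((∃ a > (0 : ℝ), MagSparse b θ (fun _ => 0) m 1 a 0 ∧
          MagSparse b (fun x y => θ x y + Real.pi) (fun _ => 0) m 1 a 0) ↔
        ¬ ∃ k : ℤ, F = 2 * Real.pi * k)) ∧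
    (Odd n →
      ((∃ a > (0 : ℝ), MagSparse b θ (fun _ => 0) m 1 a 0 ∧
          MagSparse b (fun x y => θ x y + Real.pi) (fun _ => 0) m 1 a 0) ↔
        ¬ ∃ k : ℤ, F = Real.pi * k)) := by
  obtain ⟨-, -, -, -, hθ, -⟩ := hG
  have hb0 := cyc_b_nonneg Φ b hb
  have hbsym := cyc_bsym Φ b hb
  have hθ' : ∀ x y : Y, ∃ k : ℤ, (θ x y + Real.pi) + (θ y x + Real.pi) = 2 * Real.pi * k := by
    intro x y
    obtain ⟨k, hk⟩ := hθ x y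
    exact ⟨k + 1, by push_cast; linarith⟩
  have hFpi : F + n * Real.pi = ∑ j : ZMod n, (θ (Φ.symm j) (Φ.symm (j + 1)) + Real.pi) := by
    rw [Finset.sum_add_distrib, ← hF, Finset.sum_const, Finset.card_univ, ZMod.card,
      nsmul_eq_mul]
  have key : ∀ (θ₀ : Y → Y → ℝ) (F₀ : ℝ),
      (∀ x y, ∃ k : ℤ, θ₀ x y + θ₀ y x = 2 * Real.pi * k) →
      F₀ = ∑ j : ZMod n, θ₀ (Φ.symm j) (Φ.symm (j + 1)) →
      ((∃ a > (0:ℝ), MagSparse b θ₀ (fun _ => 0) m 1 a 0) ↔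
        ¬ ∃ k : ℤ, F₀ = 2 * Real.pi * k) := by
    intro θ₀ F₀ hθ₀ hF₀
    constructor
    · rintro ⟨a, ha, hsp⟩ ⟨k, hk⟩
      exact cyc_not_sparse_main hn Φ b θ₀ m hb hθ₀ F₀ hF₀ k hk ha hsp
    · intro hne
      have hs : Complex.exp ((F₀:ℂ) * Complex.I) ≠ 1 :=
        fun h => hne ((cyc_flux_exp_one F₀).1 h)
      have hs0 : 0 < ‖(1:ℂ) - Complex.exp ((F₀:ℂ) * Complex.I)‖ :=
        norm_pos_iff.2 (sub_ne_zero.2 (Ne.symm hs))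
      have hs2 : ‖(1:ℂ) - Complex.exp ((F₀:ℂ) * Complex.I)‖ ≤ 2 := by
        have h1 : ‖Complex.exp ((F₀:ℂ) * Complex.I)‖ = 1 := by
          exact Complex.norm_exp_ofReal_mul_I _
        calc ‖(1:ℂ) - Complex.exp ((F₀:ℂ) * Complex.I)‖
            ≤ ‖(1:ℂ)‖ + ‖Complex.exp ((F₀:ℂ) * Complex.I)‖ := norm_sub_le _ _
          _ = 2 := by rw [norm_one, h1]; norm_num
      have hn3 : (3:ℝ) ≤ (n:ℝ) := by exact_mod_cast hn
      have hdiv : (n:ℝ) ≤ 2 * n / ‖(1:ℂ) - Complex.exp ((F₀:ℂ) * Complex.I)‖ := by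
        rw [le_div_iff₀ hs0]; nlinarith
      exact ⟨2 * n / ‖(1:ℂ) - Complex.exp ((F₀:ℂ) * Complex.I)‖ - 1, by linarith,
        cyc_sparse_main hn Φ b θ₀ m hb hθ₀ F₀ hF₀ hs⟩
  refine ⟨key θ F hθ hF, ?_, ?_, ?_⟩
  · intro hne
    exact cyc_sparse_main hn Φ b θ m hb hθ F hF (fun h => hne ((cyc_flux_exp_one F).1 h))
  · intro hev
    constructor
    · rintro ⟨a, ha, hsp, -⟩
      exact (key θ F hθ hF).1 ⟨a, ha, hsp⟩
    · intro hne
      obtain ⟨a₁, ha₁, hsp₁⟩ := (key θ F hθ hF).2 hne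
      have hne' : ¬ ∃ k : ℤ, F + n * Real.pi = 2 * Real.pi * k := by
        rintro ⟨k, hk⟩
        obtain ⟨t, ht⟩ := hev
        have hnr : (n:ℝ) = (t:ℝ) + t := by exact_mod_cast ht
        exact hne ⟨k - t, by push_cast; linear_combination hk - Real.pi * hnr⟩
      obtain ⟨a₂, ha₂, hsp₂⟩ :=
        (key (fun x y => θ x y + Real.pi) (F + n * Real.pi) hθ' hFpi).2 hne'
      exact ⟨max a₁ a₂, lt_of_lt_of_le ha₁ (le_max_left _ _),
        cyc_mono b θ m hb0 hbsym ha₁.le (le_max_left _ _) hsp₁,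
        cyc_mono b (fun x y => θ x y + Real.pi) m hb0 hbsym ha₂.le (le_max_right _ _) hsp₂⟩
  · intro hodd
    obtain ⟨l, hl⟩ := hodd
    have hnr : (n:ℝ) = 2 * l + 1 := by exact_mod_cast hl
    constructor
    · rintro ⟨a, ha, hsp, hsp'⟩ ⟨k, hk⟩
      rcases Int.even_or_odd k with ⟨t, ht⟩ | ⟨t, ht⟩
      · have hkr : (k:ℝ) = (t:ℝ) + t := by exact_mod_cast ht
        exact cyc_not_sparse_main hn Φ b θ m hb hθ F hF t
          (by push_cast; linear_combination hk + Real.pi * hkr) ha hsp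
      · have hkr : (k:ℝ) = 2 * t + 1 := by exact_mod_cast ht
        exact cyc_not_sparse_main hn Φ b (fun x y => θ x y + Real.pi) m hb hθ'
          (F + n * Real.pi) hFpi (t + l + 1)
          (by push_cast; linear_combination hk + Real.pi * hkr + Real.pi * hnr) ha hsp'
    · intro hne
      have hne1 : ¬ ∃ k : ℤ, F = 2 * Real.pi * k := by
        rintro ⟨k, hk⟩
        exact hne ⟨2 * k, by push_cast; linear_combination hk⟩
      have hne2 : ¬ ∃ k : ℤ, F + n * Real.pi = 2 * Real.pi * k := by
        rintro ⟨k, hk⟩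
        exact hne ⟨2 * k - n, by push_cast; linear_combination hk⟩
      obtain ⟨a₁, ha₁, hsp₁⟩ := (key θ F hθ hF).2 hne1
      obtain ⟨a₂, ha₂, hsp₂⟩ :=
        (key (fun x y => θ x y + Real.pi) (F + n * Real.pi) hθ' hFpi).2 hne2
      exact ⟨max a₁ a₂, lt_of_lt_of_le ha₁ (le_max_left _ _),
        cyc_mono b θ m hb0 hbsym ha₁.le (le_max_left _ _) hsp₁,
        cyc_mono b (fun x y => θ x y + Real.pi) m hb0 hbsym ha₂.le (le_max_right _ _) hsp₂⟩
end
end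

section
/- Let (b,θ,0,m) be a magnetic graph over X with potential q = 0 and let W ⊆ X be finite and nonempty. Then there exists a function f : W → ℂ with Σ_{x∈W} |f(x)|² m(x) = 1 such that (1/2) Σ_{x,y∈W} b(x,y)|f(x) − e^{iθ(x,y)} f(y)|² ≤ ι_{2,θ}(W)/m(W), where m(W) = Σ_{x∈W} m(x); consequently the bottom of the spectrum of the magnetic Laplacian H_{θ,W} satisfies 0 ≤ min σ(H_{θ,W}) ≤ ι_{2,θ}(W)/m(W) ≤ 2 ι_{1,θ}(W)/m(W). -/
open Complex MeasureTheory
open scoped Classical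

noncomputable section

variable {X : Type*}

lemma rpow_two' (t : ℝ) : t ^ (2:ℝ) = t ^ 2 := by
  rw [show (2:ℝ) = ((2:ℕ):ℝ) by norm_num, Real.rpow_natCast]

/-- existence of a minimizer of the torus energy -/
lemma exists_min_torus (b θ : X → X → ℝ) (W : Finset X) :
    ∃ τ₀ : X → ℂ, (∀ x ∈ W, ‖τ₀ x‖ = 1) ∧ ∀ τ : X → ℂ, (∀ x ∈ W, ‖τ x‖ = 1) →
      (∑ x ∈ W, ∑ y ∈ W, b x y * ‖τ₀ x - Complex.exp ((θ x y : ℂ) * Complex.I) * τ₀ y‖ ^ 2)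
      ≤ ∑ x ∈ W, ∑ y ∈ W, b x y * ‖τ x - Complex.exp ((θ x y : ℂ) * Complex.I) * τ y‖ ^ 2 := by
  set G : ({x // x ∈ W} → Circle) → ℝ := fun σ =>
    ∑ x ∈ W.attach, ∑ y ∈ W.attach,
      b x y * ‖(σ x : ℂ) - Complex.exp ((θ x y : ℂ) * Complex.I) * (σ y : ℂ)‖ ^ 2 with hG
  have hcont : Continuous G := by
    apply continuous_finset_sum
    intro x _
    apply continuous_finset_sum
    intro y _
    have h1 : Continuous fun σ : {x // x ∈ W} → Circle => (σ x : ℂ) :=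
      continuous_subtype_val.comp (continuous_apply x)
    have h2 : Continuous fun σ : {x // x ∈ W} → Circle => (σ y : ℂ) :=
      continuous_subtype_val.comp (continuous_apply y)
    fun_prop
  obtain ⟨σ₀, -, hσ₀'⟩ := isCompact_univ.exists_isMinOn Set.univ_nonempty hcont.continuousOn
  have hσ₀ : ∀ σ, G σ₀ ≤ G σ := fun σ => hσ₀' (Set.mem_univ σ)
  refine ⟨fun x => if h : x ∈ W then σ₀ ⟨x, h⟩ else 1, ?_, ?_⟩
  · intro x hx
    simp [hx, Circle.norm_coe]
  · intro τ hτ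
    set σ : {x // x ∈ W} → Circle := fun i =>
      ⟨τ i, mem_sphere_zero_iff_norm.2 (hτ i i.2)⟩ with hσ
    have e1 : (∑ x ∈ W, ∑ y ∈ W, b x y *
        ‖(if h : x ∈ W then (σ₀ ⟨x, h⟩ : ℂ) else 1) -
          Complex.exp ((θ x y : ℂ) * Complex.I) *
            (if h : y ∈ W then (σ₀ ⟨y, h⟩ : ℂ) else 1)‖ ^ 2) = G σ₀ := by
      rw [hG, ← Finset.sum_attach W]
      refine Finset.sum_congr rfl fun x _ => ?_
      rw [← Finset.sum_attach W]
      refine Finset.sum_congr rfl fun y _ => ?_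
      rw [dif_pos x.2, dif_pos y.2]
    have e2 : (∑ x ∈ W, ∑ y ∈ W, b x y *
        ‖τ x - Complex.exp ((θ x y : ℂ) * Complex.I) * τ y‖ ^ 2) = G σ := by
      rw [hG, ← Finset.sum_attach W]
      refine Finset.sum_congr rfl fun x _ => ?_
      rw [← Finset.sum_attach W]
    rw [e1, e2]
    exact hσ₀ σ

/-- for `q = 0` and finite nonempty `W` there is `f` with
`Σ_{x∈W}|f(x)|²m(x) = 1` whose energy is at most `ι_{2,θ}(W)/m(W)`; consequently the
bottom of the spectrum of `H_{θ,W}` (the infimum of the Rayleigh quotients) satisfies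
`0 ≤ min σ(H_{θ,W}) ≤ ι_{2,θ}(W)/m(W) ≤ 2ι_{1,θ}(W)/m(W)`. -/
theorem bottom_spectrum_le_frust [Countable X]
    (b θ : X → X → ℝ) (m : X → ℝ) (hG : IsMagneticGraph b θ m)
    (W : Finset X) (hW : W.Nonempty)
    (lam : ℝ)
    (hlam : lam = sInf {r : ℝ | ∃ f : X → ℂ,
      (∑ x ∈ W, ‖f x‖ ^ (2 : ℝ) * m x) = 1 ∧
      r = (1 / 2) * ∑ x ∈ W, ∑ y ∈ W,
        b x y * ‖f x - Complex.exp ((θ x y : ℂ) * Complex.I) * f y‖ ^ (2 : ℝ)}) :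
    (∃ f : X → ℂ, (∑ x ∈ W, ‖f x‖ ^ (2 : ℝ) * m x) = 1 ∧
      (1 / 2) * ∑ x ∈ W, ∑ y ∈ W,
          b x y * ‖f x - Complex.exp ((θ x y : ℂ) * Complex.I) * f y‖ ^ (2 : ℝ) ≤
        frust b θ 2 W / (∑ x ∈ W, m x)) ∧
    0 ≤ lam ∧
    lam ≤ frust b θ 2 W / (∑ x ∈ W, m x) ∧
    frust b θ 2 W / (∑ x ∈ W, m x) ≤ 2 * frust b θ 1 W / (∑ x ∈ W, m x) := by
  obtain ⟨hb0, hbsymm, hbdiag, hbsum, hθa, hm⟩ := hG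
  set Mw := ∑ x ∈ W, m x with hMwdef
  have hMw : 0 < Mw := Finset.sum_pos (fun x _ => hm x) hW
  have hnn : ∀ (p : ℝ) (g : X → ℂ), 0 ≤ (1 / 2) * ∑ x ∈ W, ∑ y ∈ W,
      b x y * ‖g x - Complex.exp ((θ x y : ℂ) * Complex.I) * g y‖ ^ p := by
    intro p g
    apply mul_nonneg (by norm_num)
    exact Finset.sum_nonneg fun x _ => Finset.sum_nonneg fun y _ =>
      mul_nonneg (hb0 x y) (Real.rpow_nonneg (norm_nonneg _) p)
  obtain ⟨τ₀, hτ₀, hmin⟩ := exists_min_torus b θ W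
  set V : ℝ := ∑ x ∈ W, ∑ y ∈ W,
      b x y * ‖τ₀ x - Complex.exp ((θ x y : ℂ) * Complex.I) * τ₀ y‖ ^ (2:ℝ) with hV
  set S2 := {r : ℝ | ∃ τ : X → ℂ, (∀ x ∈ W, ‖τ x‖ = 1) ∧
    r = (1 / 2) * ∑ x ∈ W, ∑ y ∈ W,
      b x y * ‖τ x - Complex.exp ((θ x y : ℂ) * Complex.I) * τ y‖ ^ (2:ℝ)} with hS2
  have hfrust2 : frust b θ 2 W = sInf S2 := rfl
  have hbdd2 : BddBelow S2 := by
    refine ⟨0, ?_⟩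
    rintro r ⟨τ, hτ, rfl⟩
    exact hnn 2 τ
  have hmemS2 : (1/2) * V ∈ S2 := ⟨τ₀, hτ₀, rfl⟩
  have hlbS2 : ∀ r ∈ S2, (1/2) * V ≤ r := by
    rintro r ⟨τ, hτ, rfl⟩
    have := hmin τ hτ
    simp only [rpow_two'] at *
    linarith
  have hfr2 : frust b θ 2 W = (1/2) * V := by
    rw [hfrust2]
    exact le_antisymm (csInf_le hbdd2 hmemS2) (le_csInf ⟨_, hmemS2⟩ hlbS2)
  set s : ℝ := (Real.sqrt Mw)⁻¹ with hs
  have hs0 : 0 ≤ s := inv_nonneg.2 (Real.sqrt_nonneg _)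
  have hs2 : s ^ 2 = Mw⁻¹ := by
    rw [hs, inv_pow, Real.sq_sqrt hMw.le]
  set f : X → ℂ := fun x => (s : ℂ) * τ₀ x with hf
  have hfnorm : ∀ x ∈ W, ‖f x‖ = s := by
    intro x hx
    rw [hf]
    simp only [norm_mul, Complex.norm_real, Real.norm_eq_abs]
    rw [_root_.abs_of_nonneg hs0, hτ₀ x hx, mul_one]
  have hnorm1 : (∑ x ∈ W, ‖f x‖ ^ (2:ℝ) * m x) = 1 := by
    have hc : ∀ x ∈ W, ‖f x‖ ^ (2:ℝ) * m x = Mw⁻¹ * m x := by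
      intro x hx
      rw [rpow_two', hfnorm x hx, hs2]
    rw [Finset.sum_congr rfl hc, ← Finset.mul_sum, ← hMwdef, inv_mul_cancel₀ hMw.ne']
  have henergy : (1 / 2) * ∑ x ∈ W, ∑ y ∈ W,
      b x y * ‖f x - Complex.exp ((θ x y : ℂ) * Complex.I) * f y‖ ^ (2:ℝ)
      = frust b θ 2 W / Mw := by
    have hterm : ∀ x y : X,
        b x y * ‖f x - Complex.exp ((θ x y : ℂ) * Complex.I) * f y‖ ^ (2:ℝ)
        = Mw⁻¹ * (b x y * ‖τ₀ x - Complex.exp ((θ x y : ℂ) * Complex.I) * τ₀ y‖ ^ (2:ℝ)) := by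
      intro x y
      have hd : f x - Complex.exp ((θ x y : ℂ) * Complex.I) * f y
          = (s : ℂ) * (τ₀ x - Complex.exp ((θ x y : ℂ) * Complex.I) * τ₀ y) := by
        rw [hf]; ring
      rw [hd, norm_mul, Complex.norm_real, Real.norm_eq_abs, _root_.abs_of_nonneg hs0,
        rpow_two', rpow_two', mul_pow, hs2]
      ring
    calc (1 / 2) * ∑ x ∈ W, ∑ y ∈ W,
        b x y * ‖f x - Complex.exp ((θ x y : ℂ) * Complex.I) * f y‖ ^ (2:ℝ)
        = (1/2) * (Mw⁻¹ * V) := by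
          rw [hV]
          congr 1
          rw [Finset.mul_sum]
          refine Finset.sum_congr rfl fun x _ => ?_
          rw [Finset.mul_sum]
          exact Finset.sum_congr rfl fun y _ => hterm x y
      _ = frust b θ 2 W / Mw := by rw [hfr2]; field_simp
  refine ⟨⟨f, hnorm1, le_of_eq henergy⟩, ?_, ?_, ?_⟩
  · rw [hlam]
    refine Real.sInf_nonneg fun r hr => ?_
    obtain ⟨g, hg1, rfl⟩ := hr
    exact hnn 2 g
  · rw [hlam]
    refine csInf_le ⟨0, ?_⟩ ⟨f, hnorm1, henergy.symm⟩
    rintro r ⟨g, hg1, rfl⟩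
    exact hnn 2 g
  · have hexp1 : ∀ x y : X, ‖Complex.exp ((θ x y : ℂ) * Complex.I)‖ = 1 := fun x y => by
      rw [Complex.norm_exp_ofReal_mul_I]
    have h21 : frust b θ 2 W ≤ 2 * frust b θ 1 W := by
      have hkey : (1/2) * frust b θ 2 W ≤ frust b θ 1 W := by
        refine le_csInf ⟨(1/2) * ∑ x ∈ W, ∑ y ∈ W,
          b x y * ‖(fun _ : X => (1:ℂ)) x - Complex.exp ((θ x y : ℂ) * Complex.I) *
            (fun _ : X => (1:ℂ)) y‖ ^ (1:ℝ),
          fun _ : X => (1:ℂ), fun _ _ => by norm_num, rfl⟩ ?_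
        rintro r ⟨τ, hτ, rfl⟩
        have h2le : frust b θ 2 W ≤ (1/2) * ∑ x ∈ W, ∑ y ∈ W,
            b x y * ‖τ x - Complex.exp ((θ x y : ℂ) * Complex.I) * τ y‖ ^ (2:ℝ) := by
          rw [hfrust2]
          exact csInf_le hbdd2 ⟨τ, hτ, rfl⟩
        have htw : ∀ x ∈ W, ∀ y ∈ W,
            b x y * ‖τ x - Complex.exp ((θ x y : ℂ) * Complex.I) * τ y‖ ^ (2:ℝ)
            ≤ 2 * (b x y * ‖τ x - Complex.exp ((θ x y : ℂ) * Complex.I) * τ y‖ ^ (1:ℝ)) := by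
          intro x hx y hy
          have hdle : ‖τ x - Complex.exp ((θ x y : ℂ) * Complex.I) * τ y‖ ≤ 2 := by
            calc ‖τ x - Complex.exp ((θ x y : ℂ) * Complex.I) * τ y‖
                ≤ ‖τ x‖ + ‖Complex.exp ((θ x y : ℂ) * Complex.I) * τ y‖ := norm_sub_le _ _
              _ = 2 := by rw [norm_mul, hexp1, hτ x hx, hτ y hy]; norm_num
          rw [rpow_two', Real.rpow_one, pow_two]
          have hbn : 0 ≤ b x y * ‖τ x - Complex.exp ((θ x y : ℂ) * Complex.I) * τ y‖ :=
            mul_nonneg (hb0 x y) (norm_nonneg _)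
          nlinarith [mul_le_mul_of_nonneg_left hdle hbn]
        have hsum : (∑ x ∈ W, ∑ y ∈ W,
            b x y * ‖τ x - Complex.exp ((θ x y : ℂ) * Complex.I) * τ y‖ ^ (2:ℝ))
            ≤ ∑ x ∈ W, ∑ y ∈ W, 2 * (b x y *
              ‖τ x - Complex.exp ((θ x y : ℂ) * Complex.I) * τ y‖ ^ (1:ℝ)) :=
          Finset.sum_le_sum fun x hx => Finset.sum_le_sum fun y hy => htw x hx y hy
        simp only [← Finset.mul_sum] at hsum
        linarith
      linarith
    have hfr2nn : 0 ≤ frust b θ 2 W := hfr2 ▸ hnn 2 τ₀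
    rw [div_le_div_iff₀ hMw hMw]
    nlinarith [hMw, h21, hfr2nn]
end
end
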